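/- arXiv:1902.07896 — 3 statements merged into one kernel-verified Lean document; each statement's English description precedes it below -/
import Mathlib

section
/- Let ρ be the ReLU activation function, and let Φ¹ and Φ² be neural networks with L₁ and L₂ layers respectively, such that the input dimension of Φ¹ equals the output dimension of Φ². Then there exists a neural network Φ¹⊙Φ² (the sparse concatenation) whose input dimension equals that of Φ² and whose output dimension equals that of Φ¹, such that R_ρ(Φ¹⊙Φ²)(x) = R_ρ(Φ¹)(R_ρ(Φ²)(x)) for all x, with L(Φ¹⊙Φ²) = L₁ + L₂, M(Φ¹⊙Φ²) ≤ 2·M(Φ¹) + 2·M(Φ²), and N(Φ¹⊙Φ²) ≤ 2·N(Φ¹) + 2·N(Φ²). -/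
noncomputable section

open Finset

/-- The ReLU activation function `x ↦ max 0 x`. -/
def relu (x : ℝ) : ℝ := max 0 x

/-- A feedforward neural network with possible skip connections.
The entry `A l k i j` is the weight connecting neuron `j` of layer `k` to neuron `i` of
layer `l` (meaningful for `1 ≤ l ≤ L`, `k < l`, `i < arity l`, `j < arity k`), and
`b l i` is the bias of neuron `i` of layer `l`.  Entries outside the meaningful ranges
are irrelevant: they influence neither the realization nor the complexity counts. -/
structure NN where
  d : ℕ
  L : ℕ
  hL : 0 < L
  arity : ℕ → ℕ
  harity : arity 0 = d
  A : ℕ → ℕ → ℕ → ℕ → ℝ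
  b : ℕ → ℕ → ℝ

namespace NN

/-- The vector of neuron values at layer `l`; layer `0` is the (truncated) input, and
for `l ≥ 1` the activation `ρ` is applied componentwise. -/
def hidden (Φ : NN) (ρ : ℝ → ℝ) (x : ℕ → ℝ) : ℕ → ℕ → ℝ
  | 0 => fun i => if i < Φ.d then x i else 0
  | l + 1 => fun i =>
      ρ ((∑ k : Fin (l + 1), ∑ j ∈ Finset.range (Φ.arity k),
        Φ.A (l + 1) k i j * Φ.hidden ρ x k j) + Φ.b (l + 1) i)
  termination_by l => l
  decreasing_by exact k.isLt

/-- The realization `R_ρ(Φ)` of the network `Φ` with activation function `ρ`: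
no activation is applied in the last layer `L`. -/
def realize (Φ : NN) (ρ : ℝ → ℝ) (x : ℕ → ℝ) : ℕ → ℝ := fun i =>
  (∑ k : Fin Φ.L, ∑ j ∈ Finset.range (Φ.arity k),
    Φ.A Φ.L k i j * Φ.hidden ρ x k j) + Φ.b Φ.L i

/-- The output dimension `N_L` of a network. -/
def outDim (Φ : NN) : ℕ := Φ.arity Φ.L

/-- The number of neurons `N(Φ) = d + N_1 + … + N_L`. -/
def numNeurons (Φ : NN) : ℕ := ∑ l ∈ Finset.range (Φ.L + 1), Φ.arity l

/-- The number of nonzero weights `M(Φ)`. -/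
def numWeights (Φ : NN) : ℕ :=
  ∑ l ∈ Finset.Icc 1 Φ.L,
    ((∑ k ∈ Finset.range l,
        {p : ℕ × ℕ | p.1 < Φ.arity l ∧ p.2 < Φ.arity k ∧ Φ.A l k p.1 p.2 ≠ 0}.ncard) +
      {i : ℕ | i < Φ.arity l ∧ Φ.b l i ≠ 0}.ncard)

/-- A standard neural network: only neurons in neighboring layers are connected. -/
def IsStandard (Φ : NN) : Prop :=
  ∀ l k, l ≤ Φ.L → k + 2 ≤ l → ∀ i j, i < Φ.arity l → j < Φ.arity k → Φ.A l k i j = 0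

/-- A neural network architecture: a network all of whose entries are `0` or `1`. -/
def IsArchitecture (𝒜 : NN) : Prop :=
  (∀ l k i j, 𝒜.A l k i j = 0 ∨ 𝒜.A l k i j = 1) ∧ ∀ l i, 𝒜.b l i = 0 ∨ 𝒜.b l i = 1

/-- `Φ` has architecture `𝒜`: same layer dimensions, and nonzero entries of `Φ` occur
only at positions where `𝒜` is nonzero. -/
def HasArchitecture (Φ 𝒜 : NN) : Prop :=
  Φ.d = 𝒜.d ∧ Φ.L = 𝒜.L ∧ (∀ l, Φ.arity l = 𝒜.arity l) ∧
    (∀ l k i j, Φ.A l k i j ≠ 0 → 𝒜.A l k i j ≠ 0) ∧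
    (∀ l i, Φ.b l i ≠ 0 → 𝒜.b l i ≠ 0)

end NN

/-- Embedding of `ℝ^d` into the input signals `ℕ → ℝ` of a network. -/
def embed (d : ℕ) (x : Fin d → ℝ) : ℕ → ℝ := fun i => if h : i < d then x ⟨i, h⟩ else 0

/-- The unit cube `[0,1]^d`. -/
def cube (d : ℕ) : Set (Fin d → ℝ) := {x | ∀ i, x i ∈ Set.Icc (0 : ℝ) 1}

/-- The piecewise linear bump function `ψ`. -/
def bump (x : ℝ) : ℝ := if |x| < 1 then 1 else if |x| ≤ 2 then 2 - |x| else 0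

/-- The partition-of-unity function `φ_m(x) = ∏_l ψ(3N(x_l − m_l/N))`. -/
def pou (d N : ℕ) (m : Fin d → ℕ) (x : Fin d → ℝ) : ℝ :=
  ∏ l, bump (3 * N * (x l - m l / N))

/-- The polynomial `x ↦ ∑_{|α| ≤ n−1} c_α x^α` with coefficients `c`. -/
def poly (d n : ℕ) (c : (Fin d → Fin n) → ℝ) (x : Fin d → ℝ) : ℝ :=
  ∑ α ∈ Finset.univ.filter (fun α : Fin d → Fin n => (∑ l, (α l : ℕ)) ≤ n - 1),
    c α * ∏ l, x l ^ (α l : ℕ)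

/-- The partial derivative in the `i`-th coordinate direction. -/
def pderivAt {d : ℕ} (i : Fin d) (f : (Fin d → ℝ) → ℝ) : (Fin d → ℝ) → ℝ :=
  fun x => fderiv ℝ f x (Pi.single i 1)

/-- Iterated partial derivative `D^α f` along a list of coordinate directions. -/
def pdList {d : ℕ} : List (Fin d) → ((Fin d → ℝ) → ℝ) → ((Fin d → ℝ) → ℝ)
  | [], f => f
  | i :: t, f => pdList t (pderivAt i f)

/-- `f` lies in the `W^{n,∞}`-ball of radius `B` on `[0,1]^d`: it is `(n−1)`-times
continuously differentiable on an open set containing the cube, all partial derivatives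
of order `≤ n−1` are bounded by `B` on the cube, and those of order `n−1` are
`B`-Lipschitz on the cube with respect to the Euclidean norm. -/
def InWBall (d n : ℕ) (B : ℝ) (f : (Fin d → ℝ) → ℝ) : Prop :=
  (∃ U : Set (Fin d → ℝ), IsOpen U ∧ cube d ⊆ U ∧ ContDiffOn ℝ (n - 1 : ℕ) f U) ∧
    (∀ l : List (Fin d), l.length ≤ n - 1 → ∀ x ∈ cube d, |pdList l f x| ≤ B) ∧
    (∀ l : List (Fin d), l.length = n - 1 → ∀ x ∈ cube d, ∀ y ∈ cube d,
      |pdList l f x - pdList l f y| ≤ B * Real.sqrt (∑ i, (x i - y i) ^ 2))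

private lemma relu_sub_relu_neg (a : ℝ) : relu a - relu (-a) = a := by
  unfold relu
  rcases le_total 0 a with h | h
  · rw [max_eq_right h, max_eq_left (neg_nonpos.mpr h)]; ring
  · rw [max_eq_left h, max_eq_right (neg_nonneg.mpr h)]; ring

private lemma finite_wset (a b : ℕ) (Q : ℕ × ℕ → Prop) :
    {p : ℕ × ℕ | p.1 < a ∧ p.2 < b ∧ Q p}.Finite :=
  ((Set.finite_Iio a).prod (Set.finite_Iio b)).subset fun p hp => ⟨hp.1, hp.2.1⟩

private lemma finite_bset (a : ℕ) (Q : ℕ → Prop) :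
    {i : ℕ | i < a ∧ Q i}.Finite :=
  (Set.finite_Iio a).subset fun i hi => hi.1

private lemma ncard_split1 (m a : ℕ) (g : ℕ → ℕ → ℝ) :
    {p : ℕ × ℕ | p.1 < 2 * m ∧ p.2 < a ∧
        (if p.1 < m then g p.1 p.2 else -g (p.1 - m) p.2) ≠ 0}.ncard
      ≤ 2 * {p : ℕ × ℕ | p.1 < m ∧ p.2 < a ∧ g p.1 p.2 ≠ 0}.ncard := by
  set S0 := {p : ℕ × ℕ | p.1 < m ∧ p.2 < a ∧ g p.1 p.2 ≠ 0} with hS0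
  have hfin : S0.Finite := finite_wset m a _
  have hsub : {p : ℕ × ℕ | p.1 < 2 * m ∧ p.2 < a ∧
        (if p.1 < m then g p.1 p.2 else -g (p.1 - m) p.2) ≠ 0}
      ⊆ S0 ∪ (fun p : ℕ × ℕ => (p.1 + m, p.2)) '' S0 := by
    rintro ⟨i, j⟩ ⟨h1, h2, h3⟩
    by_cases him : i < m
    · exact Or.inl ⟨him, h2, by simpa [him] using h3⟩
    · refine Or.inr ⟨(i - m, j), ⟨by omega, h2, ?_⟩, ?_⟩
      · simp only [him, if_false] at h3; simpa using h3
      · show (i - m + m, j) = (i, j)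
        have : i - m + m = i := by omega
        rw [this]
  calc {p : ℕ × ℕ | p.1 < 2 * m ∧ p.2 < a ∧
        (if p.1 < m then g p.1 p.2 else -g (p.1 - m) p.2) ≠ 0}.ncard
      ≤ (S0 ∪ (fun p : ℕ × ℕ => (p.1 + m, p.2)) '' S0).ncard :=
        Set.ncard_le_ncard hsub (hfin.union (hfin.image _))
    _ ≤ S0.ncard + ((fun p : ℕ × ℕ => (p.1 + m, p.2)) '' S0).ncard := Set.ncard_union_le _ _
    _ ≤ S0.ncard + S0.ncard := Nat.add_le_add_left (Set.ncard_image_le hfin) _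
    _ = 2 * S0.ncard := by ring

private lemma ncard_split2 (m a : ℕ) (g : ℕ → ℕ → ℝ) :
    {p : ℕ × ℕ | p.1 < a ∧ p.2 < 2 * m ∧
        (if p.2 < m then g p.1 p.2 else -g p.1 (p.2 - m)) ≠ 0}.ncard
      ≤ 2 * {p : ℕ × ℕ | p.1 < a ∧ p.2 < m ∧ g p.1 p.2 ≠ 0}.ncard := by
  set S0 := {p : ℕ × ℕ | p.1 < a ∧ p.2 < m ∧ g p.1 p.2 ≠ 0} with hS0
  have hfin : S0.Finite := finite_wset a m _
  have hsub : {p : ℕ × ℕ | p.1 < a ∧ p.2 < 2 * m ∧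
        (if p.2 < m then g p.1 p.2 else -g p.1 (p.2 - m)) ≠ 0}
      ⊆ S0 ∪ (fun p : ℕ × ℕ => (p.1, p.2 + m)) '' S0 := by
    rintro ⟨i, j⟩ ⟨h1, h2, h3⟩
    by_cases hjm : j < m
    · exact Or.inl ⟨h1, hjm, by simpa [hjm] using h3⟩
    · refine Or.inr ⟨(i, j - m), ⟨h1, by omega, ?_⟩, ?_⟩
      · simp only [hjm, if_false] at h3; simpa using h3
      · show (i, j - m + m) = (i, j)
        have : j - m + m = j := by omega
        rw [this]
  calc {p : ℕ × ℕ | p.1 < a ∧ p.2 < 2 * m ∧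
        (if p.2 < m then g p.1 p.2 else -g p.1 (p.2 - m)) ≠ 0}.ncard
      ≤ (S0 ∪ (fun p : ℕ × ℕ => (p.1, p.2 + m)) '' S0).ncard :=
        Set.ncard_le_ncard hsub (hfin.union (hfin.image _))
    _ ≤ S0.ncard + ((fun p : ℕ × ℕ => (p.1, p.2 + m)) '' S0).ncard := Set.ncard_union_le _ _
    _ ≤ S0.ncard + S0.ncard := Nat.add_le_add_left (Set.ncard_image_le hfin) _
    _ = 2 * S0.ncard := by ring

private lemma ncard_splitb (m : ℕ) (c : ℕ → ℝ) :
    {i : ℕ | i < 2 * m ∧ (if i < m then c i else -c (i - m)) ≠ 0}.ncard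
      ≤ 2 * {i : ℕ | i < m ∧ c i ≠ 0}.ncard := by
  set S0 := {i : ℕ | i < m ∧ c i ≠ 0} with hS0
  have hfin : S0.Finite := finite_bset m _
  have hsub : {i : ℕ | i < 2 * m ∧ (if i < m then c i else -c (i - m)) ≠ 0}
      ⊆ S0 ∪ (fun i : ℕ => i + m) '' S0 := by
    intro i hi
    obtain ⟨h1, h3⟩ := hi
    by_cases him : i < m
    · exact Or.inl ⟨him, by simpa [him] using h3⟩
    · refine Or.inr ⟨i - m, ⟨by omega, ?_⟩, show i - m + m = i by omega⟩
      simp only [him, if_false] at h3; simpa using h3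
  calc {i : ℕ | i < 2 * m ∧ (if i < m then c i else -c (i - m)) ≠ 0}.ncard
      ≤ (S0 ∪ (fun i : ℕ => i + m) '' S0).ncard :=
        Set.ncard_le_ncard hsub (hfin.union (hfin.image _))
    _ ≤ S0.ncard + ((fun i : ℕ => i + m) '' S0).ncard := Set.ncard_union_le _ _
    _ ≤ S0.ncard + S0.ncard := Nat.add_le_add_left (Set.ncard_image_le hfin) _
    _ = 2 * S0.ncard := by ring

lemma NN.hidden_zero (Φ : NN) (ρ : ℝ → ℝ) (x : ℕ → ℝ) (i : ℕ) :
    Φ.hidden ρ x 0 i = if i < Φ.d then x i else 0 := by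
  rw [NN.hidden]

lemma NN.hidden_succ (Φ : NN) (ρ : ℝ → ℝ) (x : ℕ → ℝ) (l i : ℕ) :
    Φ.hidden ρ x (l + 1) i =
      ρ ((∑ k ∈ range (l + 1), ∑ j ∈ range (Φ.arity k),
        Φ.A (l + 1) k i j * Φ.hidden ρ x k j) + Φ.b (l + 1) i) := by
  rw [NN.hidden]
  beta_reduce
  rw [Fin.sum_univ_eq_sum_range
    (fun kk => ∑ j ∈ range (Φ.arity kk), Φ.A (l + 1) kk i j * Φ.hidden ρ x kk j) (l + 1)]

lemma NN.realize_range (Φ : NN) (ρ : ℝ → ℝ) (x : ℕ → ℝ) (i : ℕ) :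
    Φ.realize ρ x i =
      (∑ k ∈ range Φ.L, ∑ j ∈ range (Φ.arity k),
        Φ.A Φ.L k i j * Φ.hidden ρ x k j) + Φ.b Φ.L i := by
  rw [NN.realize, Fin.sum_univ_eq_sum_range
    (fun kk => ∑ j ∈ range (Φ.arity kk), Φ.A Φ.L kk i j * Φ.hidden ρ x kk j) Φ.L]

/-- The sparse concatenation network `Φ₁ ⊙ Φ₂`. -/
def scNN (Φ₁ Φ₂ : NN) : NN where
  d := Φ₂.d
  L := Φ₁.L + Φ₂.L
  hL := by have := Φ₂.hL; omega
  arity := fun l =>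
    if l < Φ₂.L then Φ₂.arity l
    else if l = Φ₂.L then 2 * Φ₂.outDim
    else Φ₁.arity (l - Φ₂.L)
  harity := by simp [Φ₂.hL, Φ₂.harity]
  A := fun l k i j =>
    if l < Φ₂.L then Φ₂.A l k i j
    else if l = Φ₂.L then
      if i < Φ₂.outDim then Φ₂.A Φ₂.L k i j else -Φ₂.A Φ₂.L k (i - Φ₂.outDim) j
    else if k < Φ₂.L then 0
    else if k = Φ₂.L then
      if j < Φ₂.outDim then Φ₁.A (l - Φ₂.L) 0 i j else -Φ₁.A (l - Φ₂.L) 0 i (j - Φ₂.outDim)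
    else Φ₁.A (l - Φ₂.L) (k - Φ₂.L) i j
  b := fun l i =>
    if l < Φ₂.L then Φ₂.b l i
    else if l = Φ₂.L then
      if i < Φ₂.outDim then Φ₂.b Φ₂.L i else -Φ₂.b Φ₂.L (i - Φ₂.outDim)
    else Φ₁.b (l - Φ₂.L) i

variable (Φ₁ Φ₂ : NN)

lemma scNN_arity_lt {l : ℕ} (hl : l < Φ₂.L) : (scNN Φ₁ Φ₂).arity l = Φ₂.arity l := by
  simp [scNN, hl]

lemma scNN_arity_eq : (scNN Φ₁ Φ₂).arity Φ₂.L = 2 * Φ₂.outDim := by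
  simp [scNN]

lemma scNN_arity_gt {l : ℕ} (hl : Φ₂.L < l) :
    (scNN Φ₁ Φ₂).arity l = Φ₁.arity (l - Φ₂.L) := by
  simp [scNN, show ¬ l < Φ₂.L by omega, show ¬ l = Φ₂.L by omega]

lemma scNN_A_lt {l : ℕ} (hl : l < Φ₂.L) (k i j : ℕ) :
    (scNN Φ₁ Φ₂).A l k i j = Φ₂.A l k i j := by
  simp [scNN, hl]

lemma scNN_A_eq (k i j : ℕ) :
    (scNN Φ₁ Φ₂).A Φ₂.L k i j =
      if i < Φ₂.outDim then Φ₂.A Φ₂.L k i j else -Φ₂.A Φ₂.L k (i - Φ₂.outDim) j := by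
  simp [scNN]

lemma scNN_A_gt_lt {l k : ℕ} (hl : Φ₂.L < l) (hk : k < Φ₂.L) (i j : ℕ) :
    (scNN Φ₁ Φ₂).A l k i j = 0 := by
  simp [scNN, show ¬ l < Φ₂.L by omega, show ¬ l = Φ₂.L by omega, hk]

lemma scNN_A_gt_eq {l : ℕ} (hl : Φ₂.L < l) (i j : ℕ) :
    (scNN Φ₁ Φ₂).A l Φ₂.L i j =
      if j < Φ₂.outDim then Φ₁.A (l - Φ₂.L) 0 i j
      else -Φ₁.A (l - Φ₂.L) 0 i (j - Φ₂.outDim) := by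
  simp [scNN, show ¬ l < Φ₂.L by omega, show ¬ l = Φ₂.L by omega]

lemma scNN_A_gt_gt {l k : ℕ} (hl : Φ₂.L < l) (hk : Φ₂.L < k) (i j : ℕ) :
    (scNN Φ₁ Φ₂).A l k i j = Φ₁.A (l - Φ₂.L) (k - Φ₂.L) i j := by
  simp [scNN, show ¬ l < Φ₂.L by omega, show ¬ l = Φ₂.L by omega,
    show ¬ k < Φ₂.L by omega, show ¬ k = Φ₂.L by omega]

lemma scNN_b_lt {l : ℕ} (hl : l < Φ₂.L) (i : ℕ) :
    (scNN Φ₁ Φ₂).b l i = Φ₂.b l i := by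
  simp [scNN, hl]

lemma scNN_b_eq (i : ℕ) :
    (scNN Φ₁ Φ₂).b Φ₂.L i =
      if i < Φ₂.outDim then Φ₂.b Φ₂.L i else -Φ₂.b Φ₂.L (i - Φ₂.outDim) := by
  simp [scNN]

lemma scNN_b_gt {l : ℕ} (hl : Φ₂.L < l) (i : ℕ) :
    (scNN Φ₁ Φ₂).b l i = Φ₁.b (l - Φ₂.L) i := by
  simp [scNN, show ¬ l < Φ₂.L by omega, show ¬ l = Φ₂.L by omega]

lemma scNN_hidden_lt (x : ℕ → ℝ) :
    ∀ l, l < Φ₂.L → ∀ i, (scNN Φ₁ Φ₂).hidden relu x l i = Φ₂.hidden relu x l i := by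
  intro l
  induction l using Nat.strong_induction_on with
  | _ l ih =>
    intro hl i
    match l with
    | 0 =>
      rw [NN.hidden_zero, NN.hidden_zero]
      rfl
    | n + 1 =>
      rw [NN.hidden_succ, NN.hidden_succ]
      congr 1
      congr 1
      · refine Finset.sum_congr rfl fun k hk => ?_
        have hkn : k < n + 1 := Finset.mem_range.mp hk
        have hk' : k < Φ₂.L := by omega
        rw [scNN_arity_lt Φ₁ Φ₂ hk']
        refine Finset.sum_congr rfl fun j _ => ?_
        rw [scNN_A_lt Φ₁ Φ₂ hl, ih k hkn hk']
      · exact scNN_b_lt Φ₁ Φ₂ hl i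

lemma scNN_hidden_L2 (x : ℕ → ℝ) (i : ℕ) :
    (scNN Φ₁ Φ₂).hidden relu x Φ₂.L i =
      if i < Φ₂.outDim then relu (Φ₂.realize relu x i)
      else relu (-Φ₂.realize relu x (i - Φ₂.outDim)) := by
  obtain ⟨n, hn⟩ : ∃ n, Φ₂.L = n + 1 := ⟨Φ₂.L - 1, (Nat.succ_pred_eq_of_pos Φ₂.hL).symm⟩
  have hpre : (∑ k ∈ range Φ₂.L, ∑ j ∈ range ((scNN Φ₁ Φ₂).arity k),
      (scNN Φ₁ Φ₂).A Φ₂.L k i j * (scNN Φ₁ Φ₂).hidden relu x k j) =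
      if i < Φ₂.outDim
      then ∑ k ∈ range Φ₂.L, ∑ j ∈ range (Φ₂.arity k),
        Φ₂.A Φ₂.L k i j * Φ₂.hidden relu x k j
      else -∑ k ∈ range Φ₂.L, ∑ j ∈ range (Φ₂.arity k),
        Φ₂.A Φ₂.L k (i - Φ₂.outDim) j * Φ₂.hidden relu x k j := by
    by_cases him : i < Φ₂.outDim
    · rw [if_pos him]
      refine Finset.sum_congr rfl fun k hk => ?_
      have hk' : k < Φ₂.L := Finset.mem_range.mp hk
      rw [scNN_arity_lt Φ₁ Φ₂ hk']
      refine Finset.sum_congr rfl fun j _ => ?_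
      rw [scNN_A_eq Φ₁ Φ₂, if_pos him, scNN_hidden_lt Φ₁ Φ₂ x k hk']
    · rw [if_neg him, ← Finset.sum_neg_distrib]
      refine Finset.sum_congr rfl fun k hk => ?_
      have hk' : k < Φ₂.L := Finset.mem_range.mp hk
      rw [scNN_arity_lt Φ₁ Φ₂ hk', ← Finset.sum_neg_distrib]
      refine Finset.sum_congr rfl fun j _ => ?_
      rw [scNN_A_eq Φ₁ Φ₂, if_neg him, scNN_hidden_lt Φ₁ Φ₂ x k hk', neg_mul]
  have hstep := NN.hidden_succ (scNN Φ₁ Φ₂) relu x n i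
  rw [← hn] at hstep
  rw [hstep, hpre, scNN_b_eq Φ₁ Φ₂]
  by_cases him : i < Φ₂.outDim
  · rw [if_pos him, if_pos him, if_pos him, NN.realize_range]
  · rw [if_neg him, if_neg him, if_neg him, NN.realize_range, neg_add]

lemma scNN_pre (h : Φ₁.d = Φ₂.outDim) (x : ℕ → ℝ) :
    ∀ n, n + 1 ≤ Φ₁.L → ∀ i,
      (∑ k ∈ range (Φ₂.L + n + 1), ∑ j ∈ range ((scNN Φ₁ Φ₂).arity k),
          (scNN Φ₁ Φ₂).A (Φ₂.L + n + 1) k i j * (scNN Φ₁ Φ₂).hidden relu x k j)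
        + (scNN Φ₁ Φ₂).b (Φ₂.L + n + 1) i =
      (∑ k ∈ range (n + 1), ∑ j ∈ range (Φ₁.arity k),
          Φ₁.A (n + 1) k i j * Φ₁.hidden relu (Φ₂.realize relu x) k j)
        + Φ₁.b (n + 1) i := by
  intro n
  induction n using Nat.strong_induction_on with
  | _ n ih =>
    intro hn i
    have hzero : ∑ k ∈ range Φ₂.L, ∑ j ∈ range ((scNN Φ₁ Φ₂).arity k),
        (scNN Φ₁ Φ₂).A (Φ₂.L + (n + 1)) k i j * (scNN Φ₁ Φ₂).hidden relu x k j = 0 :=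
      Finset.sum_eq_zero fun k hk => Finset.sum_eq_zero fun j _ => by
        rw [scNN_A_gt_lt Φ₁ Φ₂ (by omega) (Finset.mem_range.mp hk), zero_mul]
    have hbias : (scNN Φ₁ Φ₂).b (Φ₂.L + (n + 1)) i = Φ₁.b (n + 1) i := by
      rw [scNN_b_gt Φ₁ Φ₂ (by omega), Nat.add_sub_cancel_left]
    have hF0 : (∑ j ∈ range ((scNN Φ₁ Φ₂).arity (Φ₂.L + 0)),
        (scNN Φ₁ Φ₂).A (Φ₂.L + (n + 1)) (Φ₂.L + 0) i j
          * (scNN Φ₁ Φ₂).hidden relu x (Φ₂.L + 0) j) =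
        ∑ j ∈ range (Φ₁.arity 0),
          Φ₁.A (n + 1) 0 i j * Φ₁.hidden relu (Φ₂.realize relu x) 0 j := by
      rw [Nat.add_zero, scNN_arity_eq, two_mul, Finset.sum_range_add]
      have h1 : ∀ j ∈ range Φ₂.outDim,
          (scNN Φ₁ Φ₂).A (Φ₂.L + (n + 1)) Φ₂.L i j * (scNN Φ₁ Φ₂).hidden relu x Φ₂.L j
            = Φ₁.A (n + 1) 0 i j * relu (Φ₂.realize relu x j) := by
        intro j hj
        have hj' := Finset.mem_range.mp hj
        rw [scNN_A_gt_eq Φ₁ Φ₂ (by omega), if_pos hj', Nat.add_sub_cancel_left,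
          scNN_hidden_L2 Φ₁ Φ₂ x j, if_pos hj']
      have h2 : ∀ j ∈ range Φ₂.outDim,
          (scNN Φ₁ Φ₂).A (Φ₂.L + (n + 1)) Φ₂.L i (Φ₂.outDim + j)
            * (scNN Φ₁ Φ₂).hidden relu x Φ₂.L (Φ₂.outDim + j)
            = -(Φ₁.A (n + 1) 0 i j * relu (-Φ₂.realize relu x j)) := by
        intro j hj
        have hge : ¬ (Φ₂.outDim + j < Φ₂.outDim) := by omega
        rw [scNN_A_gt_eq Φ₁ Φ₂ (by omega), if_neg hge, Nat.add_sub_cancel_left,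
          scNN_hidden_L2 Φ₁ Φ₂ x _, if_neg hge, Nat.add_sub_cancel_left, neg_mul]
      rw [Finset.sum_congr rfl h1, Finset.sum_congr rfl h2, ← Finset.sum_add_distrib]
      have h3 : ∀ j ∈ range Φ₂.outDim,
          Φ₁.A (n + 1) 0 i j * relu (Φ₂.realize relu x j)
            + -(Φ₁.A (n + 1) 0 i j * relu (-Φ₂.realize relu x j))
            = Φ₁.A (n + 1) 0 i j * Φ₂.realize relu x j := by
        intro j _
        calc Φ₁.A (n + 1) 0 i j * relu (Φ₂.realize relu x j)
              + -(Φ₁.A (n + 1) 0 i j * relu (-Φ₂.realize relu x j))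
            = Φ₁.A (n + 1) 0 i j
              * (relu (Φ₂.realize relu x j) - relu (-Φ₂.realize relu x j)) := by ring
          _ = Φ₁.A (n + 1) 0 i j * Φ₂.realize relu x j := by rw [relu_sub_relu_neg]
      rw [Finset.sum_congr rfl h3, show Φ₁.arity 0 = Φ₂.outDim from Φ₁.harity.trans h]
      refine Finset.sum_congr rfl fun j hj => ?_
      rw [NN.hidden_zero, if_pos (show j < Φ₁.d by rw [h]; exact Finset.mem_range.mp hj)]
    have hmid : ∀ k ∈ range n,
        (∑ j ∈ range ((scNN Φ₁ Φ₂).arity (Φ₂.L + (k + 1))),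
          (scNN Φ₁ Φ₂).A (Φ₂.L + (n + 1)) (Φ₂.L + (k + 1)) i j
            * (scNN Φ₁ Φ₂).hidden relu x (Φ₂.L + (k + 1)) j) =
        ∑ j ∈ range (Φ₁.arity (k + 1)),
          Φ₁.A (n + 1) (k + 1) i j * Φ₁.hidden relu (Φ₂.realize relu x) (k + 1) j := by
      intro k hk
      have hk' := Finset.mem_range.mp hk
      rw [show (scNN Φ₁ Φ₂).arity (Φ₂.L + (k + 1)) = Φ₁.arity (k + 1) by
        rw [scNN_arity_gt Φ₁ Φ₂ (by omega), Nat.add_sub_cancel_left]]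
      refine Finset.sum_congr rfl fun j _ => ?_
      rw [scNN_A_gt_gt Φ₁ Φ₂ (by omega) (by omega), Nat.add_sub_cancel_left,
        Nat.add_sub_cancel_left]
      congr 1
      rw [show Φ₂.L + (k + 1) = Φ₂.L + k + 1 by omega, NN.hidden_succ, NN.hidden_succ]
      exact congrArg relu (ih k hk' (by omega) j)
    calc (∑ k ∈ range (Φ₂.L + n + 1), ∑ j ∈ range ((scNN Φ₁ Φ₂).arity k),
            (scNN Φ₁ Φ₂).A (Φ₂.L + n + 1) k i j * (scNN Φ₁ Φ₂).hidden relu x k j)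
          + (scNN Φ₁ Φ₂).b (Φ₂.L + n + 1) i
        = (∑ k ∈ range (Φ₂.L + (n + 1)), ∑ j ∈ range ((scNN Φ₁ Φ₂).arity k),
            (scNN Φ₁ Φ₂).A (Φ₂.L + (n + 1)) k i j * (scNN Φ₁ Φ₂).hidden relu x k j)
          + (scNN Φ₁ Φ₂).b (Φ₂.L + (n + 1)) i := by
          rw [show Φ₂.L + n + 1 = Φ₂.L + (n + 1) by omega]
      _ = ((∑ k ∈ range Φ₂.L, ∑ j ∈ range ((scNN Φ₁ Φ₂).arity k),
            (scNN Φ₁ Φ₂).A (Φ₂.L + (n + 1)) k i j * (scNN Φ₁ Φ₂).hidden relu x k j)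
          + ∑ k ∈ range (n + 1), ∑ j ∈ range ((scNN Φ₁ Φ₂).arity (Φ₂.L + k)),
            (scNN Φ₁ Φ₂).A (Φ₂.L + (n + 1)) (Φ₂.L + k) i j
              * (scNN Φ₁ Φ₂).hidden relu x (Φ₂.L + k) j)
          + (scNN Φ₁ Φ₂).b (Φ₂.L + (n + 1)) i := by rw [Finset.sum_range_add]
      _ = ((0 : ℝ)
          + ((∑ k ∈ range n, ∑ j ∈ range ((scNN Φ₁ Φ₂).arity (Φ₂.L + (k + 1))),
            (scNN Φ₁ Φ₂).A (Φ₂.L + (n + 1)) (Φ₂.L + (k + 1)) i j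
              * (scNN Φ₁ Φ₂).hidden relu x (Φ₂.L + (k + 1)) j)
            + ∑ j ∈ range ((scNN Φ₁ Φ₂).arity (Φ₂.L + 0)),
            (scNN Φ₁ Φ₂).A (Φ₂.L + (n + 1)) (Φ₂.L + 0) i j
              * (scNN Φ₁ Φ₂).hidden relu x (Φ₂.L + 0) j))
          + (scNN Φ₁ Φ₂).b (Φ₂.L + (n + 1)) i := by rw [hzero, Finset.sum_range_succ']
      _ = ((0 : ℝ)
          + ((∑ k ∈ range n, ∑ j ∈ range (Φ₁.arity (k + 1)),
            Φ₁.A (n + 1) (k + 1) i j * Φ₁.hidden relu (Φ₂.realize relu x) (k + 1) j)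
            + ∑ j ∈ range (Φ₁.arity 0),
            Φ₁.A (n + 1) 0 i j * Φ₁.hidden relu (Φ₂.realize relu x) 0 j))
          + Φ₁.b (n + 1) i := by rw [Finset.sum_congr rfl hmid, hF0, hbias]
      _ = (∑ k ∈ range (n + 1), ∑ j ∈ range (Φ₁.arity k),
            Φ₁.A (n + 1) k i j * Φ₁.hidden relu (Φ₂.realize relu x) k j)
          + Φ₁.b (n + 1) i := by
          rw [Finset.sum_range_succ' (fun k => ∑ j ∈ range (Φ₁.arity k),
            Φ₁.A (n + 1) k i j * Φ₁.hidden relu (Φ₂.realize relu x) k j) n, zero_add]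

/-- **Sparse concatenation.**
For ReLU networks `Φ₁, Φ₂` with matching dimensions there is a network `Ψ = Φ₁ ⊙ Φ₂`
realizing the composition, with `L(Ψ) = L₁ + L₂`, `M(Ψ) ≤ 2M(Φ₁) + 2M(Φ₂)` and
`N(Ψ) ≤ 2N(Φ₁) + 2N(Φ₂)`. -/
theorem sparse_concatenation (Φ₁ Φ₂ : NN) (h : Φ₁.d = Φ₂.outDim) :
    ∃ Ψ : NN, Ψ.d = Φ₂.d ∧ Ψ.outDim = Φ₁.outDim ∧
      Ψ.L = Φ₁.L + Φ₂.L ∧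
      Ψ.numWeights ≤ 2 * Φ₁.numWeights + 2 * Φ₂.numWeights ∧
      Ψ.numNeurons ≤ 2 * Φ₁.numNeurons + 2 * Φ₂.numNeurons ∧
      ∀ x : ℕ → ℝ, ∀ i < Φ₁.outDim,
        Ψ.realize relu x i = Φ₁.realize relu (Φ₂.realize relu x) i := by
  refine ⟨scNN Φ₁ Φ₂, rfl, ?_, rfl, ?_, ?_, ?_⟩
  · show (scNN Φ₁ Φ₂).arity (Φ₁.L + Φ₂.L) = Φ₁.outDim
    rw [scNN_arity_gt Φ₁ Φ₂ (by have := Φ₁.hL; omega), Nat.add_sub_cancel]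
    rfl
  · -- weights
    have hIcc2 : Finset.Icc 1 Φ₂.L = Finset.Ioc 0 Φ₂.L := by ext a; simp; omega
    have hIcc1 : Finset.Icc 1 Φ₁.L = Finset.Ioc 0 Φ₁.L := by ext a; simp; omega
    have hIccS : Finset.Icc 1 ((scNN Φ₁ Φ₂).L) = Finset.Ioc 0 (Φ₁.L + Φ₂.L) := by
      ext a; simp [show (scNN Φ₁ Φ₂).L = Φ₁.L + Φ₂.L from rfl]; omega
    rw [NN.numWeights, hIccS]
    have hsplit := Finset.sum_Ioc_consecutive (fun l =>
        (∑ k ∈ range l, {p : ℕ × ℕ | p.1 < (scNN Φ₁ Φ₂).arity l ∧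
            p.2 < (scNN Φ₁ Φ₂).arity k ∧ (scNN Φ₁ Φ₂).A l k p.1 p.2 ≠ 0}.ncard)
          + {i : ℕ | i < (scNN Φ₁ Φ₂).arity l ∧ (scNN Φ₁ Φ₂).b l i ≠ 0}.ncard)
      (show (0:ℕ) ≤ Φ₂.L by omega) (show Φ₂.L ≤ Φ₁.L + Φ₂.L by omega)
    rw [← hsplit]
    have hpart1 : ∑ l ∈ Finset.Ioc 0 Φ₂.L,
        ((∑ k ∈ range l, {p : ℕ × ℕ | p.1 < (scNN Φ₁ Φ₂).arity l ∧
            p.2 < (scNN Φ₁ Φ₂).arity k ∧ (scNN Φ₁ Φ₂).A l k p.1 p.2 ≠ 0}.ncard)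
          + {i : ℕ | i < (scNN Φ₁ Φ₂).arity l ∧ (scNN Φ₁ Φ₂).b l i ≠ 0}.ncard)
        ≤ 2 * Φ₂.numWeights := by
      have claim : ∀ l ∈ Finset.Ioc 0 Φ₂.L,
          (∑ k ∈ range l, {p : ℕ × ℕ | p.1 < (scNN Φ₁ Φ₂).arity l ∧
              p.2 < (scNN Φ₁ Φ₂).arity k ∧ (scNN Φ₁ Φ₂).A l k p.1 p.2 ≠ 0}.ncard)
            + {i : ℕ | i < (scNN Φ₁ Φ₂).arity l ∧ (scNN Φ₁ Φ₂).b l i ≠ 0}.ncard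
          ≤ 2 * ((∑ k ∈ range l, {p : ℕ × ℕ | p.1 < Φ₂.arity l ∧
              p.2 < Φ₂.arity k ∧ Φ₂.A l k p.1 p.2 ≠ 0}.ncard)
            + {i : ℕ | i < Φ₂.arity l ∧ Φ₂.b l i ≠ 0}.ncard) := by
        intro l hl
        obtain ⟨hl0, hl2⟩ := Finset.mem_Ioc.mp hl
        rcases lt_or_eq_of_le hl2 with hlt | heq
        · have hW : (∑ k ∈ range l, {p : ℕ × ℕ | p.1 < (scNN Φ₁ Φ₂).arity l ∧
              p.2 < (scNN Φ₁ Φ₂).arity k ∧ (scNN Φ₁ Φ₂).A l k p.1 p.2 ≠ 0}.ncard)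
              + {i : ℕ | i < (scNN Φ₁ Φ₂).arity l ∧ (scNN Φ₁ Φ₂).b l i ≠ 0}.ncard
              = (∑ k ∈ range l, {p : ℕ × ℕ | p.1 < Φ₂.arity l ∧
                p.2 < Φ₂.arity k ∧ Φ₂.A l k p.1 p.2 ≠ 0}.ncard)
              + {i : ℕ | i < Φ₂.arity l ∧ Φ₂.b l i ≠ 0}.ncard := by
            congr 1
            · refine Finset.sum_congr rfl fun k hk => ?_
              have hk' : k < Φ₂.L := by have := Finset.mem_range.mp hk; omega
              congr 1
              ext p
              simp only [Set.mem_setOf_eq]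
              rw [scNN_arity_lt Φ₁ Φ₂ hlt, scNN_arity_lt Φ₁ Φ₂ hk', scNN_A_lt Φ₁ Φ₂ hlt]
            · congr 1
              ext i
              simp only [Set.mem_setOf_eq]
              rw [scNN_arity_lt Φ₁ Φ₂ hlt, scNN_b_lt Φ₁ Φ₂ hlt]
          rw [hW]; omega
        · subst heq
          have hS : ∀ k ∈ range Φ₂.L,
              {p : ℕ × ℕ | p.1 < (scNN Φ₁ Φ₂).arity Φ₂.L ∧
                p.2 < (scNN Φ₁ Φ₂).arity k ∧ (scNN Φ₁ Φ₂).A Φ₂.L k p.1 p.2 ≠ 0}.ncard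
              ≤ 2 * {p : ℕ × ℕ | p.1 < Φ₂.arity Φ₂.L ∧
                p.2 < Φ₂.arity k ∧ Φ₂.A Φ₂.L k p.1 p.2 ≠ 0}.ncard := by
            intro k hk
            have hk' := Finset.mem_range.mp hk
            have hset : {p : ℕ × ℕ | p.1 < (scNN Φ₁ Φ₂).arity Φ₂.L ∧
                p.2 < (scNN Φ₁ Φ₂).arity k ∧ (scNN Φ₁ Φ₂).A Φ₂.L k p.1 p.2 ≠ 0}
                = {p : ℕ × ℕ | p.1 < 2 * Φ₂.outDim ∧ p.2 < Φ₂.arity k ∧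
                  (if p.1 < Φ₂.outDim then Φ₂.A Φ₂.L k p.1 p.2
                   else -Φ₂.A Φ₂.L k (p.1 - Φ₂.outDim) p.2) ≠ 0} := by
              ext p
              simp only [Set.mem_setOf_eq]
              rw [scNN_arity_eq, scNN_arity_lt Φ₁ Φ₂ hk', scNN_A_eq]
            rw [hset]
            exact ncard_split1 Φ₂.outDim (Φ₂.arity k) (Φ₂.A Φ₂.L k)
          have hT : {i : ℕ | i < (scNN Φ₁ Φ₂).arity Φ₂.L ∧ (scNN Φ₁ Φ₂).b Φ₂.L i ≠ 0}.ncard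
              ≤ 2 * {i : ℕ | i < Φ₂.arity Φ₂.L ∧ Φ₂.b Φ₂.L i ≠ 0}.ncard := by
            have hset : {i : ℕ | i < (scNN Φ₁ Φ₂).arity Φ₂.L ∧ (scNN Φ₁ Φ₂).b Φ₂.L i ≠ 0}
                = {i : ℕ | i < 2 * Φ₂.outDim ∧
                  (if i < Φ₂.outDim then Φ₂.b Φ₂.L i else -Φ₂.b Φ₂.L (i - Φ₂.outDim)) ≠ 0} := by
              ext i; simp only [Set.mem_setOf_eq]; rw [scNN_arity_eq, scNN_b_eq]
            rw [hset]
            exact ncard_splitb Φ₂.outDim (Φ₂.b Φ₂.L)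
          calc (∑ k ∈ range Φ₂.L, {p : ℕ × ℕ | p.1 < (scNN Φ₁ Φ₂).arity Φ₂.L ∧
                p.2 < (scNN Φ₁ Φ₂).arity k ∧ (scNN Φ₁ Φ₂).A Φ₂.L k p.1 p.2 ≠ 0}.ncard)
              + {i : ℕ | i < (scNN Φ₁ Φ₂).arity Φ₂.L ∧ (scNN Φ₁ Φ₂).b Φ₂.L i ≠ 0}.ncard
              ≤ (∑ k ∈ range Φ₂.L, 2 * {p : ℕ × ℕ | p.1 < Φ₂.arity Φ₂.L ∧
                p.2 < Φ₂.arity k ∧ Φ₂.A Φ₂.L k p.1 p.2 ≠ 0}.ncard)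
              + 2 * {i : ℕ | i < Φ₂.arity Φ₂.L ∧ Φ₂.b Φ₂.L i ≠ 0}.ncard :=
                add_le_add (Finset.sum_le_sum hS) hT
            _ = 2 * ((∑ k ∈ range Φ₂.L, {p : ℕ × ℕ | p.1 < Φ₂.arity Φ₂.L ∧
                p.2 < Φ₂.arity k ∧ Φ₂.A Φ₂.L k p.1 p.2 ≠ 0}.ncard)
              + {i : ℕ | i < Φ₂.arity Φ₂.L ∧ Φ₂.b Φ₂.L i ≠ 0}.ncard) := by
                rw [← Finset.mul_sum]; ring
      calc ∑ l ∈ Finset.Ioc 0 Φ₂.L,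
            ((∑ k ∈ range l, {p : ℕ × ℕ | p.1 < (scNN Φ₁ Φ₂).arity l ∧
              p.2 < (scNN Φ₁ Φ₂).arity k ∧ (scNN Φ₁ Φ₂).A l k p.1 p.2 ≠ 0}.ncard)
            + {i : ℕ | i < (scNN Φ₁ Φ₂).arity l ∧ (scNN Φ₁ Φ₂).b l i ≠ 0}.ncard)
          ≤ ∑ l ∈ Finset.Ioc 0 Φ₂.L,
            2 * ((∑ k ∈ range l, {p : ℕ × ℕ | p.1 < Φ₂.arity l ∧
              p.2 < Φ₂.arity k ∧ Φ₂.A l k p.1 p.2 ≠ 0}.ncard)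
            + {i : ℕ | i < Φ₂.arity l ∧ Φ₂.b l i ≠ 0}.ncard) := Finset.sum_le_sum claim
        _ = 2 * Φ₂.numWeights := by rw [← Finset.mul_sum, NN.numWeights, hIcc2]
    have hpart2 : ∑ l ∈ Finset.Ioc Φ₂.L (Φ₁.L + Φ₂.L),
        ((∑ k ∈ range l, {p : ℕ × ℕ | p.1 < (scNN Φ₁ Φ₂).arity l ∧
            p.2 < (scNN Φ₁ Φ₂).arity k ∧ (scNN Φ₁ Φ₂).A l k p.1 p.2 ≠ 0}.ncard)
          + {i : ℕ | i < (scNN Φ₁ Φ₂).arity l ∧ (scNN Φ₁ Φ₂).b l i ≠ 0}.ncard)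
        ≤ 2 * Φ₁.numWeights := by
      have hmap : Finset.map (addLeftEmbedding Φ₂.L) (Finset.Ioc 0 Φ₁.L)
          = Finset.Ioc Φ₂.L (Φ₁.L + Φ₂.L) := by
        rw [Finset.map_add_left_Ioc]
        congr 1 <;> omega
      rw [← hmap, Finset.sum_map]
      simp only [addLeftEmbedding_apply]
      have claim2 : ∀ l ∈ Finset.Ioc 0 Φ₁.L,
          (∑ k ∈ range (Φ₂.L + l), {p : ℕ × ℕ | p.1 < (scNN Φ₁ Φ₂).arity (Φ₂.L + l) ∧
              p.2 < (scNN Φ₁ Φ₂).arity k ∧ (scNN Φ₁ Φ₂).A (Φ₂.L + l) k p.1 p.2 ≠ 0}.ncard)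
            + {i : ℕ | i < (scNN Φ₁ Φ₂).arity (Φ₂.L + l) ∧ (scNN Φ₁ Φ₂).b (Φ₂.L + l) i ≠ 0}.ncard
          ≤ 2 * ((∑ k ∈ range l, {p : ℕ × ℕ | p.1 < Φ₁.arity l ∧
              p.2 < Φ₁.arity k ∧ Φ₁.A l k p.1 p.2 ≠ 0}.ncard)
            + {i : ℕ | i < Φ₁.arity l ∧ Φ₁.b l i ≠ 0}.ncard) := by
        intro l hl
        obtain ⟨hl0, hl1⟩ := Finset.mem_Ioc.mp hl
        obtain ⟨n', rfl⟩ : ∃ n', l = n' + 1 := ⟨l - 1, by omega⟩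
        have hgt : Φ₂.L < Φ₂.L + (n' + 1) := by omega
        have hzero : ∀ k ∈ range Φ₂.L,
            {p : ℕ × ℕ | p.1 < (scNN Φ₁ Φ₂).arity (Φ₂.L + (n' + 1)) ∧
              p.2 < (scNN Φ₁ Φ₂).arity k ∧
              (scNN Φ₁ Φ₂).A (Φ₂.L + (n' + 1)) k p.1 p.2 ≠ 0}.ncard = 0 := by
          intro k hk
          have hk' := Finset.mem_range.mp hk
          have hempty : {p : ℕ × ℕ | p.1 < (scNN Φ₁ Φ₂).arity (Φ₂.L + (n' + 1)) ∧
              p.2 < (scNN Φ₁ Φ₂).arity k ∧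
              (scNN Φ₁ Φ₂).A (Φ₂.L + (n' + 1)) k p.1 p.2 ≠ 0} = ∅ := by
            ext p
            simp only [Set.mem_setOf_eq, Set.mem_empty_iff_false, iff_false, not_and]
            intro _ _
            rw [scNN_A_gt_lt Φ₁ Φ₂ hgt hk']
            simp
          rw [hempty, Set.ncard_empty]
        have h0term : {p : ℕ × ℕ | p.1 < (scNN Φ₁ Φ₂).arity (Φ₂.L + (n' + 1)) ∧
              p.2 < (scNN Φ₁ Φ₂).arity (Φ₂.L + 0) ∧
              (scNN Φ₁ Φ₂).A (Φ₂.L + (n' + 1)) (Φ₂.L + 0) p.1 p.2 ≠ 0}.ncard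
            ≤ 2 * {p : ℕ × ℕ | p.1 < Φ₁.arity (n' + 1) ∧
              p.2 < Φ₁.arity 0 ∧ Φ₁.A (n' + 1) 0 p.1 p.2 ≠ 0}.ncard := by
          have hset : {p : ℕ × ℕ | p.1 < (scNN Φ₁ Φ₂).arity (Φ₂.L + (n' + 1)) ∧
              p.2 < (scNN Φ₁ Φ₂).arity (Φ₂.L + 0) ∧
              (scNN Φ₁ Φ₂).A (Φ₂.L + (n' + 1)) (Φ₂.L + 0) p.1 p.2 ≠ 0}
              = {p : ℕ × ℕ | p.1 < Φ₁.arity (n' + 1) ∧ p.2 < 2 * Φ₂.outDim ∧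
                (if p.2 < Φ₂.outDim then Φ₁.A (n' + 1) 0 p.1 p.2
                 else -Φ₁.A (n' + 1) 0 p.1 (p.2 - Φ₂.outDim)) ≠ 0} := by
            ext p
            simp only [Set.mem_setOf_eq, Nat.add_zero]
            rw [scNN_arity_gt Φ₁ Φ₂ hgt, Nat.add_sub_cancel_left,
              scNN_arity_eq, scNN_A_gt_eq Φ₁ Φ₂ hgt, Nat.add_sub_cancel_left]
          rw [hset, show Φ₁.arity 0 = Φ₂.outDim from Φ₁.harity.trans h]
          exact ncard_split2 Φ₂.outDim (Φ₁.arity (n' + 1)) (Φ₁.A (n' + 1) 0)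
        have hmidterm : ∀ k ∈ range n',
            {p : ℕ × ℕ | p.1 < (scNN Φ₁ Φ₂).arity (Φ₂.L + (n' + 1)) ∧
              p.2 < (scNN Φ₁ Φ₂).arity (Φ₂.L + (k + 1)) ∧
              (scNN Φ₁ Φ₂).A (Φ₂.L + (n' + 1)) (Φ₂.L + (k + 1)) p.1 p.2 ≠ 0}.ncard
            = {p : ℕ × ℕ | p.1 < Φ₁.arity (n' + 1) ∧
              p.2 < Φ₁.arity (k + 1) ∧ Φ₁.A (n' + 1) (k + 1) p.1 p.2 ≠ 0}.ncard := by
          intro k hk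
          have hgt2 : Φ₂.L < Φ₂.L + (k + 1) := by omega
          congr 1
          ext p
          simp only [Set.mem_setOf_eq]
          rw [scNN_arity_gt Φ₁ Φ₂ hgt, Nat.add_sub_cancel_left,
            scNN_arity_gt Φ₁ Φ₂ hgt2, Nat.add_sub_cancel_left,
            scNN_A_gt_gt Φ₁ Φ₂ hgt hgt2, Nat.add_sub_cancel_left, Nat.add_sub_cancel_left]
        have hTterm : {i : ℕ | i < (scNN Φ₁ Φ₂).arity (Φ₂.L + (n' + 1)) ∧
              (scNN Φ₁ Φ₂).b (Φ₂.L + (n' + 1)) i ≠ 0}.ncard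
            = {i : ℕ | i < Φ₁.arity (n' + 1) ∧ Φ₁.b (n' + 1) i ≠ 0}.ncard := by
          congr 1
          ext i
          simp only [Set.mem_setOf_eq]
          rw [scNN_arity_gt Φ₁ Φ₂ hgt, Nat.add_sub_cancel_left,
            scNN_b_gt Φ₁ Φ₂ hgt, Nat.add_sub_cancel_left]
        calc (∑ k ∈ range (Φ₂.L + (n' + 1)),
              {p : ℕ × ℕ | p.1 < (scNN Φ₁ Φ₂).arity (Φ₂.L + (n' + 1)) ∧
                p.2 < (scNN Φ₁ Φ₂).arity k ∧
                (scNN Φ₁ Φ₂).A (Φ₂.L + (n' + 1)) k p.1 p.2 ≠ 0}.ncard)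
            + {i : ℕ | i < (scNN Φ₁ Φ₂).arity (Φ₂.L + (n' + 1)) ∧
                (scNN Φ₁ Φ₂).b (Φ₂.L + (n' + 1)) i ≠ 0}.ncard
            = ((∑ k ∈ range Φ₂.L,
              {p : ℕ × ℕ | p.1 < (scNN Φ₁ Φ₂).arity (Φ₂.L + (n' + 1)) ∧
                p.2 < (scNN Φ₁ Φ₂).arity k ∧
                (scNN Φ₁ Φ₂).A (Φ₂.L + (n' + 1)) k p.1 p.2 ≠ 0}.ncard)
              + ∑ k ∈ range (n' + 1),
              {p : ℕ × ℕ | p.1 < (scNN Φ₁ Φ₂).arity (Φ₂.L + (n' + 1)) ∧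
                p.2 < (scNN Φ₁ Φ₂).arity (Φ₂.L + k) ∧
                (scNN Φ₁ Φ₂).A (Φ₂.L + (n' + 1)) (Φ₂.L + k) p.1 p.2 ≠ 0}.ncard)
            + {i : ℕ | i < (scNN Φ₁ Φ₂).arity (Φ₂.L + (n' + 1)) ∧
                (scNN Φ₁ Φ₂).b (Φ₂.L + (n' + 1)) i ≠ 0}.ncard := by
              rw [Finset.sum_range_add]
          _ = (0 + ((∑ k ∈ range n',
              {p : ℕ × ℕ | p.1 < (scNN Φ₁ Φ₂).arity (Φ₂.L + (n' + 1)) ∧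
                p.2 < (scNN Φ₁ Φ₂).arity (Φ₂.L + (k + 1)) ∧
                (scNN Φ₁ Φ₂).A (Φ₂.L + (n' + 1)) (Φ₂.L + (k + 1)) p.1 p.2 ≠ 0}.ncard)
              + {p : ℕ × ℕ | p.1 < (scNN Φ₁ Φ₂).arity (Φ₂.L + (n' + 1)) ∧
                p.2 < (scNN Φ₁ Φ₂).arity (Φ₂.L + 0) ∧
                (scNN Φ₁ Φ₂).A (Φ₂.L + (n' + 1)) (Φ₂.L + 0) p.1 p.2 ≠ 0}.ncard))
            + {i : ℕ | i < (scNN Φ₁ Φ₂).arity (Φ₂.L + (n' + 1)) ∧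
                (scNN Φ₁ Φ₂).b (Φ₂.L + (n' + 1)) i ≠ 0}.ncard := by
              rw [Finset.sum_eq_zero hzero, Finset.sum_range_succ']
          _ = (0 + ((∑ k ∈ range n',
              {p : ℕ × ℕ | p.1 < Φ₁.arity (n' + 1) ∧
                p.2 < Φ₁.arity (k + 1) ∧ Φ₁.A (n' + 1) (k + 1) p.1 p.2 ≠ 0}.ncard)
              + {p : ℕ × ℕ | p.1 < (scNN Φ₁ Φ₂).arity (Φ₂.L + (n' + 1)) ∧
                p.2 < (scNN Φ₁ Φ₂).arity (Φ₂.L + 0) ∧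
                (scNN Φ₁ Φ₂).A (Φ₂.L + (n' + 1)) (Φ₂.L + 0) p.1 p.2 ≠ 0}.ncard))
            + {i : ℕ | i < Φ₁.arity (n' + 1) ∧ Φ₁.b (n' + 1) i ≠ 0}.ncard := by
              rw [Finset.sum_congr rfl hmidterm, hTterm]
          _ ≤ 2 * ((∑ k ∈ range (n' + 1),
              {p : ℕ × ℕ | p.1 < Φ₁.arity (n' + 1) ∧
                p.2 < Φ₁.arity k ∧ Φ₁.A (n' + 1) k p.1 p.2 ≠ 0}.ncard)
            + {i : ℕ | i < Φ₁.arity (n' + 1) ∧ Φ₁.b (n' + 1) i ≠ 0}.ncard) := by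
              have e : (∑ k ∈ range (n' + 1),
                  {p : ℕ × ℕ | p.1 < Φ₁.arity (n' + 1) ∧
                    p.2 < Φ₁.arity k ∧ Φ₁.A (n' + 1) k p.1 p.2 ≠ 0}.ncard)
                  = (∑ k ∈ range n',
                  {p : ℕ × ℕ | p.1 < Φ₁.arity (n' + 1) ∧
                    p.2 < Φ₁.arity (k + 1) ∧ Φ₁.A (n' + 1) (k + 1) p.1 p.2 ≠ 0}.ncard)
                  + {p : ℕ × ℕ | p.1 < Φ₁.arity (n' + 1) ∧
                    p.2 < Φ₁.arity 0 ∧ Φ₁.A (n' + 1) 0 p.1 p.2 ≠ 0}.ncard :=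
                Finset.sum_range_succ' _ _
              omega
      calc ∑ l ∈ Finset.Ioc 0 Φ₁.L,
            ((∑ k ∈ range (Φ₂.L + l), {p : ℕ × ℕ | p.1 < (scNN Φ₁ Φ₂).arity (Φ₂.L + l) ∧
              p.2 < (scNN Φ₁ Φ₂).arity k ∧ (scNN Φ₁ Φ₂).A (Φ₂.L + l) k p.1 p.2 ≠ 0}.ncard)
            + {i : ℕ | i < (scNN Φ₁ Φ₂).arity (Φ₂.L + l) ∧ (scNN Φ₁ Φ₂).b (Φ₂.L + l) i ≠ 0}.ncard)
          ≤ ∑ l ∈ Finset.Ioc 0 Φ₁.L,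
            2 * ((∑ k ∈ range l, {p : ℕ × ℕ | p.1 < Φ₁.arity l ∧
              p.2 < Φ₁.arity k ∧ Φ₁.A l k p.1 p.2 ≠ 0}.ncard)
            + {i : ℕ | i < Φ₁.arity l ∧ Φ₁.b l i ≠ 0}.ncard) := Finset.sum_le_sum claim2
        _ = 2 * Φ₁.numWeights := by rw [← Finset.mul_sum, NN.numWeights, hIcc1]
    exact le_trans (add_le_add hpart1 hpart2) (by omega)
  · -- neurons
    have e2 : ∑ l ∈ range Φ₂.L, Φ₂.arity l + Φ₂.arity Φ₂.L = Φ₂.numNeurons := by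
      rw [NN.numNeurons, Finset.sum_range_succ]
    have e1 : ∑ l ∈ range Φ₁.L, Φ₁.arity (l + 1) + Φ₁.arity 0 = Φ₁.numNeurons := by
      rw [NN.numNeurons, Finset.sum_range_succ']
    have key : (scNN Φ₁ Φ₂).numNeurons
        = ∑ l ∈ range Φ₂.L, Φ₂.arity l
          + (∑ l ∈ range Φ₁.L, Φ₁.arity (l + 1) + 2 * Φ₂.outDim) := by
      rw [NN.numNeurons]
      calc ∑ l ∈ range ((scNN Φ₁ Φ₂).L + 1), (scNN Φ₁ Φ₂).arity l
          = ∑ l ∈ range (Φ₂.L + (Φ₁.L + 1)), (scNN Φ₁ Φ₂).arity l := by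
            rw [show (scNN Φ₁ Φ₂).L + 1 = Φ₂.L + (Φ₁.L + 1) by
              show Φ₁.L + Φ₂.L + 1 = _; omega]
        _ = ∑ l ∈ range Φ₂.L, (scNN Φ₁ Φ₂).arity l
            + ∑ l ∈ range (Φ₁.L + 1), (scNN Φ₁ Φ₂).arity (Φ₂.L + l) := by
            rw [Finset.sum_range_add]
        _ = ∑ l ∈ range Φ₂.L, (scNN Φ₁ Φ₂).arity l
            + (∑ l ∈ range Φ₁.L, (scNN Φ₁ Φ₂).arity (Φ₂.L + (l + 1))
               + (scNN Φ₁ Φ₂).arity (Φ₂.L + 0)) := by rw [Finset.sum_range_succ']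
        _ = ∑ l ∈ range Φ₂.L, Φ₂.arity l
            + (∑ l ∈ range Φ₁.L, Φ₁.arity (l + 1) + 2 * Φ₂.outDim) := by
            rw [Nat.add_zero, scNN_arity_eq]
            congr 1
            · exact Finset.sum_congr rfl fun l hl =>
                scNN_arity_lt Φ₁ Φ₂ (Finset.mem_range.mp hl)
            · congr 1
              refine Finset.sum_congr rfl fun l _ => ?_
              rw [scNN_arity_gt Φ₁ Φ₂ (show Φ₂.L < Φ₂.L + (l + 1) by omega),
                Nat.add_sub_cancel_left]
    have hod : Φ₂.outDim = Φ₂.arity Φ₂.L := rfl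
    omega
  · intro x i _
    obtain ⟨n, hn⟩ : ∃ n, Φ₁.L = n + 1 := ⟨Φ₁.L - 1, (Nat.succ_pred_eq_of_pos Φ₁.hL).symm⟩
    rw [NN.realize_range]
    have hLL : (scNN Φ₁ Φ₂).L = Φ₂.L + n + 1 := by
      show Φ₁.L + Φ₂.L = _; omega
    rw [hLL, scNN_pre Φ₁ Φ₂ h x n (by omega) i]
    conv_rhs => rw [NN.realize_range, hn]

end
end

section
/- Let ρ be the ReLU activation function. There exist absolute constants C₁, C₂ > 0 such that for every neural network Φ with d-dimensional input, L = L(Φ) layers, N = N(Φ) neurons and M = M(Φ) nonzero weights, there is a standard neural network Φ_st with d-dimensional input and L layers, at most C₁·L·N neurons and at most C₂·(L·N + M) nonzero weights, such that R_ρ(Φ)(x) = R_ρ(Φ_st)(x) for all x ∈ ℝ^d. -/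
noncomputable section

open Finset

namespace StdConv

/-- Relu facts -/
lemma relu_relu (a : ℝ) : relu (relu a) = relu a := by
  unfold relu; rcases le_total a 0 with h | h <;> simp [max_eq_left, max_eq_right, h]

lemma relu_sub_relu (a : ℝ) : relu a - relu (-a) = a := by
  unfold relu; rcases le_total a 0 with h | h <;>
    [ (rw [max_eq_left h, max_eq_right (by linarith)]) ;
      (rw [max_eq_right h, max_eq_left (by linarith)]) ] <;> ring

lemma relu_neg_relu (a : ℝ) : relu (-(relu a)) = 0 := by
  unfold relu; rcases le_total a 0 with h | h <;>
    simp [max_eq_left, max_eq_right, h, neg_nonpos]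

/-- offsets of the blocks -/
def off (Φ : NN) (k : ℕ) : ℕ := 2 * ∑ m ∈ Finset.range k, Φ.arity m

lemma off_succ (Φ : NN) (k : ℕ) : off Φ (k+1) = off Φ k + 2 * Φ.arity k := by
  simp [off, Finset.sum_range_succ]; ring

lemma off_mono (Φ : NN) {k l : ℕ} (h : k ≤ l) : off Φ k ≤ off Φ l := by
  unfold off
  exact Nat.mul_le_mul_left 2 (Finset.sum_le_sum_of_subset (Finset.range_subset_range.2 h))

lemma off_even (Φ : NN) (k : ℕ) : off Φ k % 2 = 0 := by simp [off, Nat.mul_mod_right]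

def sgnR (n : ℕ) : ℝ := if n % 2 = 0 then 1 else -1

lemma sgnR_ne_zero (n : ℕ) : sgnR n ≠ 0 := by unfold sgnR; split <;> norm_num

def rowA (Φ : NN) (t i j : ℕ) : ℝ :=
  ∑ k ∈ Finset.range t,
    if off Φ k ≤ j ∧ j < off Φ (k+1) then sgnR j * Φ.A t k i ((j - off Φ k)/2) else 0

def carryA (i j : ℕ) : ℝ :=
  if j = i then 1 else if j = 2*(i/2) + (1 - i % 2) then -1 else 0

def stA (Φ : NN) (t k i j : ℕ) : ℝ :=
  if k + 1 = t ∧ t ≤ Φ.L then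
    if t = Φ.L then (if Φ.L = 1 then Φ.A 1 0 i j else rowA Φ Φ.L i j)
    else if t = 1 then
      (if i < 2 * Φ.d then (if j = i / 2 then sgnR i else 0)
       else if i % 2 = 0 then Φ.A 1 0 ((i - 2 * Φ.d) / 2) j else 0)
    else
      (if i < off Φ t then carryA i j
       else if i % 2 = 0 then rowA Φ t ((i - off Φ t) / 2) j else 0)
  else 0

def stB (Φ : NN) (t i : ℕ) : ℝ :=
  if 1 ≤ t ∧ t ≤ Φ.L then
    if t = Φ.L then Φ.b Φ.L i
    else if off Φ t ≤ i ∧ i % 2 = 0 then Φ.b t ((i - off Φ t) / 2) else 0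
  else 0

def stArity (Φ : NN) (l : ℕ) : ℕ :=
  if l = 0 then Φ.d else if l = Φ.L then Φ.arity Φ.L else off Φ (l+1)

def st (Φ : NN) : NN :=
  ⟨Φ.d, Φ.L, Φ.hL, stArity Φ, by simp [stArity], stA Φ, stB Φ⟩

@[simp] lemma st_d (Φ : NN) : (st Φ).d = Φ.d := rfl
@[simp] lemma st_L (Φ : NN) : (st Φ).L = Φ.L := rfl
@[simp] lemma st_arity (Φ : NN) : (st Φ).arity = stArity Φ := rfl
@[simp] lemma st_A (Φ : NN) : (st Φ).A = stA Φ := rfl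
@[simp] lemma st_b (Φ : NN) : (st Φ).b = stB Φ := rfl

lemma off_one (Φ : NN) : off Φ 1 = 2 * Φ.d := by
  rw [show (1:ℕ) = 0 + 1 from rfl, off_succ]; simp [off, Φ.harity]

end StdConv
namespace StdConv

lemma hidden_zero (Φ : NN) (ρ : ℝ → ℝ) (x : ℕ → ℝ) (i : ℕ) :
    Φ.hidden ρ x 0 i = if i < Φ.d then x i else 0 := by
  rw [NN.hidden]

lemma hidden_succ (Φ : NN) (ρ : ℝ → ℝ) (x : ℕ → ℝ) (l i : ℕ) :
    Φ.hidden ρ x (l+1) i = ρ ((∑ k : Fin (l + 1), ∑ j ∈ Finset.range (Φ.arity k),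
        Φ.A (l + 1) k i j * Φ.hidden ρ x k j) + Φ.b (l + 1) i) := by
  rw [NN.hidden]

end StdConv
namespace StdConv

lemma sum_range_two_mul (a : ℕ) (f : ℕ → ℝ) :
    ∑ m ∈ Finset.range (2*a), f m = ∑ j ∈ Finset.range a, (f (2*j) + f (2*j+1)) := by
  induction a with
  | zero => simp
  | succ n ih =>
      rw [show 2*(n+1) = (2*n + 1) + 1 by ring, Finset.sum_range_succ, Finset.sum_range_succ,
        ih, Finset.sum_range_succ]
      ring

lemma sum_pm (s : Finset ℕ) (p q : ℕ) (hpq : p ≠ q) (g : ℕ → ℝ) :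
    ∑ j ∈ s, (if j = p then (1:ℝ) else if j = q then -1 else 0) * g j
      = (if p ∈ s then g p else 0) - (if q ∈ s then g q else 0) := by
  have h : ∀ j, (if j = p then (1:ℝ) else if j = q then -1 else 0) * g j
      = (if j = p then g j else 0) + (if j = q then -g j else 0) := by
    intro j
    by_cases h1 : j = p
    · subst h1; rw [if_pos rfl, if_pos rfl, if_neg hpq, add_zero, one_mul]
    · by_cases h2 : j = q
      · subst h2; rw [if_neg h1, if_pos rfl, if_neg h1, if_pos rfl, zero_add]; ring
      · simp [h1, h2]
  simp only [h, Finset.sum_add_distrib, Finset.sum_ite_eq' s p, Finset.sum_ite_eq' s q]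
  split <;> split <;> ring

/-- The key computation: a `rowA`-row against a paired hidden vector
computes the corresponding affine functional of the original values. -/
lemma rowA_sum (Φ : NN) (v : ℕ → ℕ → ℝ) (h : ℕ → ℝ) (t i : ℕ)
    (H : ∀ k < t, ∀ j < Φ.arity k,
      h (off Φ k + 2*j) = relu (v k j) ∧ h (off Φ k + 2*j + 1) = relu (-(v k j))) :
    ∑ j ∈ Finset.range (off Φ t), rowA Φ t i j * h j
      = ∑ k ∈ Finset.range t, ∑ j ∈ Finset.range (Φ.arity k), Φ.A t k i j * v k j := by
  simp only [rowA, Finset.sum_mul, ite_mul, zero_mul]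
  rw [Finset.sum_comm]
  refine Finset.sum_congr rfl fun k hk => ?_
  rw [Finset.mem_range] at hk
  have hsub : off Φ (k+1) ≤ off Φ t := off_mono Φ hk
  have e1 : ∑ j ∈ Finset.range (off Φ t),
      (if off Φ k ≤ j ∧ j < off Φ (k+1) then sgnR j * Φ.A t k i ((j - off Φ k)/2) * h j else 0)
      = ∑ j ∈ Finset.Ico (off Φ k) (off Φ (k+1)), sgnR j * Φ.A t k i ((j - off Φ k)/2) * h j := by
    rw [← Finset.sum_filter]
    congr 1
    ext j
    simp only [Finset.mem_filter, Finset.mem_range, Finset.mem_Ico]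
    omega
  rw [e1, Finset.sum_Ico_eq_sum_range]
  have hlen : off Φ (k+1) - off Φ k = 2 * Φ.arity k := by
    rw [off_succ]; omega
  rw [hlen, sum_range_two_mul]
  refine Finset.sum_congr rfl fun j hj => ?_
  rw [Finset.mem_range] at hj
  obtain ⟨s, hs⟩ : ∃ s, off Φ k = 2*s := ⟨_, rfl⟩
  have h2j : (off Φ k + 2*j - off Φ k)/2 = j := by omega
  have h2j1 : (off Φ k + (2*j+1) - off Φ k)/2 = j := by omega
  have hm0 : (off Φ k + 2*j) % 2 = 0 := by omega
  have hm1 : (off Φ k + (2*j+1)) % 2 ≠ 0 := by omega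
  obtain ⟨Hv, Hv'⟩ := H k hk j hj
  rw [show off Φ k + (2*j+1) = off Φ k + 2*j + 1 by ring] at h2j1 hm1 ⊢
  rw [h2j, h2j1, Hv, Hv']
  unfold sgnR
  rw [if_pos hm0, if_neg hm1]
  linear_combination Φ.A t k i j * relu_sub_relu (v k j)

end StdConv
namespace StdConv

lemma relu_zero : relu 0 = 0 := by simp [relu]

lemma hidden_st_succ (Φ : NN) (x : ℕ → ℝ) (n i : ℕ) :
    (st Φ).hidden relu x (n+1) i
      = relu ((∑ j ∈ Finset.range (stArity Φ n),
          stA Φ (n+1) n i j * (st Φ).hidden relu x n j) + stB Φ (n+1) i) := by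
  rw [hidden_succ]
  congr 2
  rw [Fin.sum_univ_eq_sum_range (fun m => ∑ j ∈ Finset.range ((st Φ).arity m),
      (st Φ).A (n+1) m i j * (st Φ).hidden relu x m j) (n+1)]
  rw [Finset.sum_eq_single_of_mem n (Finset.self_mem_range_succ n)]
  · rfl
  · intro b hb hbn
    refine Finset.sum_eq_zero fun j _ => ?_
    have : stA Φ (n+1) b i j = 0 := by
      unfold stA; rw [if_neg]; rw [Finset.mem_range] at hb; rintro ⟨h1, -⟩; omega
    rw [st_A, this, zero_mul]

lemma inv (Φ : NN) (x : ℕ → ℝ) :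
    ∀ t, 1 ≤ t → t < Φ.L → ∀ k, k ≤ t → ∀ j, j < Φ.arity k →
    (st Φ).hidden relu x t (off Φ k + 2*j) = relu (Φ.hidden relu x k j) ∧
    (st Φ).hidden relu x t (off Φ k + 2*j + 1) = relu (-(Φ.hidden relu x k j)) := by
  intro t
  induction t with
  | zero => omega
  | succ n ih =>
    intro _ hL k hk j hj
    have hoff2 : ∀ m, off Φ m % 2 = 0 := off_even Φ
    rcases Nat.eq_zero_or_pos n with hn0 | hn1
    · -- base case t = 1
      subst hn0
      have hL1 : Φ.L ≠ 1 := by omega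
      have hA : ∀ i j', stA Φ 1 0 i j' =
          (if i < 2 * Φ.d then (if j' = i / 2 then sgnR i else 0)
           else if i % 2 = 0 then Φ.A 1 0 ((i - 2 * Φ.d) / 2) j' else 0) := by
        intro i j'; unfold stA
        rw [if_pos ⟨rfl, Φ.hL⟩, if_neg (Ne.symm hL1), if_pos rfl]
      have hB : ∀ i, stB Φ 1 i =
          (if off Φ 1 ≤ i ∧ i % 2 = 0 then Φ.b 1 ((i - off Φ 1) / 2) else 0) := by
        intro i; unfold stB
        rw [if_pos ⟨le_refl 1, Φ.hL⟩, if_neg (Ne.symm hL1)]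
      have harst : stArity Φ 0 = Φ.d := by simp [stArity]
      have h0 : ∀ j', (st Φ).hidden relu x 0 j' = Φ.hidden relu x 0 j' := by
        intro j'; rw [hidden_zero, hidden_zero, st_d]
      interval_cases k
      · -- k = 0 : input pair block
        have hjd : j < Φ.d := by rwa [Φ.harity] at hj
        have hv : Φ.hidden relu x 0 j = x j := by rw [hidden_zero, if_pos hjd]
        have key : ∀ ε ≤ 1, (st Φ).hidden relu x 1 (2*j + ε) = relu (sgnR ε * x j) := by
          intro ε hε
          rw [hidden_st_succ, harst]
          have hi2d : 2*j + ε < 2 * Φ.d := by omega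
          have hidiv : (2*j + ε) / 2 = j := by omega
          have hsum : ∑ j' ∈ Finset.range Φ.d,
              stA Φ 1 0 (2*j+ε) j' * (st Φ).hidden relu x 0 j' = sgnR (2*j+ε) * x j := by
            simp only [hA, if_pos hi2d, ite_mul, zero_mul, hidiv]
            rw [Finset.sum_ite_eq' (Finset.range Φ.d) j]
            rw [if_pos (Finset.mem_range.2 hjd), hidden_zero, st_d, if_pos hjd]
          have hb0 : stB Φ 1 (2*j+ε) = 0 := by
            rw [hB, if_neg]; rw [off_one]; omega
          rw [hsum, hb0, add_zero]
          congr 1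
          unfold sgnR
          have : (2*j+ε) % 2 = ε % 2 := by omega
          rw [this]
        constructor
        · have := key 0 (by omega)
          rw [show off Φ 0 + 2*j = 2*j + 0 by simp [off]] at *
          rw [this, hv]; unfold sgnR; norm_num
        · have := key 1 (by omega)
          rw [show off Φ 0 + 2*j + 1 = 2*j + 1 by simp [off]] at *
          rw [this, hv]; unfold sgnR; norm_num
      · -- k = 1 : new block at layer 1
        have hvrw : Φ.hidden relu x 1 j = relu ((∑ j' ∈ Finset.range (Φ.arity 0),
            Φ.A 1 0 j j' * Φ.hidden relu x 0 j') + Φ.b 1 j) := by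
          rw [hidden_succ]
          congr 2
          rw [Fin.sum_univ_eq_sum_range (fun m => ∑ j' ∈ Finset.range (Φ.arity m),
            Φ.A 1 m j j' * Φ.hidden relu x m j') 1, Finset.sum_range_one]
        constructor
        · rw [hidden_st_succ, harst]
          have hi : off Φ 1 + 2*j = 2*Φ.d + 2*j := by rw [off_one]
          have hieven : (off Φ 1 + 2*j) % 2 = 0 := by have := off_one Φ; omega
          have hidiv : (off Φ 1 + 2*j - 2*Φ.d) / 2 = j := by rw [off_one]; omega
          have hsum : ∑ j' ∈ Finset.range Φ.d,
              stA Φ 1 0 (off Φ 1 + 2*j) j' * (st Φ).hidden relu x 0 j'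
              = ∑ j' ∈ Finset.range (Φ.arity 0), Φ.A 1 0 j j' * Φ.hidden relu x 0 j' := by
            rw [Φ.harity]
            refine Finset.sum_congr rfl fun j' _ => ?_
            rw [hA, if_neg (by omega), if_pos hieven, hidiv, h0]
          have hb : stB Φ 1 (off Φ 1 + 2*j) = Φ.b 1 j := by
            rw [hB, if_pos ⟨by omega, hieven⟩]
            congr 1; omega
          rw [hsum, hb, ← hvrw, hvrw, relu_relu, ← hvrw]
        · rw [hidden_st_succ, harst]
          have hiodd : (off Φ 1 + 2*j + 1) % 2 ≠ 0 := by have := off_one Φ; omega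
          have hsum : ∑ j' ∈ Finset.range Φ.d,
              stA Φ 1 0 (off Φ 1 + 2*j + 1) j' * (st Φ).hidden relu x 0 j' = 0 := by
            refine Finset.sum_eq_zero fun j' _ => ?_
            rw [hA, if_neg (by have := off_one Φ; omega), if_neg hiodd, zero_mul]
          have hb : stB Φ 1 (off Φ 1 + 2*j + 1) = 0 := by
            rw [hB, if_neg (by rintro ⟨-, h⟩; exact hiodd h)]
          rw [hsum, hb, add_zero, relu_zero, hvrw, relu_neg_relu]
    · -- inductive step t = n+1, n ≥ 1
      have hnL : n < Φ.L := by omega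
      have hL1 : (n:ℕ) + 1 ≠ Φ.L := by omega
      have hn1' : (n:ℕ) + 1 ≠ 1 := by omega
      have hA : ∀ i j', stA Φ (n+1) n i j' =
          (if i < off Φ (n+1) then carryA i j'
           else if i % 2 = 0 then rowA Φ (n+1) ((i - off Φ (n+1)) / 2) j' else 0) := by
        intro i j'; unfold stA
        rw [if_pos ⟨rfl, by omega⟩, if_neg hL1, if_neg hn1']
      have hB : ∀ i, stB Φ (n+1) i =
          (if off Φ (n+1) ≤ i ∧ i % 2 = 0 then Φ.b (n+1) ((i - off Φ (n+1)) / 2) else 0) := by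
        intro i; unfold stB
        rw [if_pos ⟨by omega, by omega⟩, if_neg hL1]
      have harst : stArity Φ n = off Φ (n+1) := by
        unfold stArity; rw [if_neg (by omega), if_neg (by omega)]
      by_cases hk1 : k = n + 1
      · -- new block
        subst hk1
        have hvrw : Φ.hidden relu x (n+1) j = relu ((∑ k' ∈ Finset.range (n+1),
            ∑ j' ∈ Finset.range (Φ.arity k'), Φ.A (n+1) k' j j' * Φ.hidden relu x k' j')
            + Φ.b (n+1) j) := by
          rw [hidden_succ]
          congr 2
          rw [Fin.sum_univ_eq_sum_range (fun m => ∑ j' ∈ Finset.range (Φ.arity m),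
            Φ.A (n+1) m j j' * Φ.hidden relu x m j') (n+1)]
        have H : ∀ k' < n + 1, ∀ j' < Φ.arity k',
            (st Φ).hidden relu x n (off Φ k' + 2*j') = relu (Φ.hidden relu x k' j') ∧
            (st Φ).hidden relu x n (off Φ k' + 2*j' + 1)
              = relu (-(Φ.hidden relu x k' j')) := by
          intro k' hk' j' hj'
          exact ih hn1 hnL k' (by omega) j' hj'
        constructor
        · rw [hidden_st_succ, harst]
          have hieven : (off Φ (n+1) + 2*j) % 2 = 0 := by have := hoff2 (n+1); omega
          have hidiv : (off Φ (n+1) + 2*j - off Φ (n+1)) / 2 = j := by omega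
          have hsum : ∑ j' ∈ Finset.range (off Φ (n+1)),
              stA Φ (n+1) n (off Φ (n+1) + 2*j) j' * (st Φ).hidden relu x n j'
              = ∑ k' ∈ Finset.range (n+1), ∑ j' ∈ Finset.range (Φ.arity k'),
                  Φ.A (n+1) k' j j' * Φ.hidden relu x k' j' := by
            have e : ∀ j', stA Φ (n+1) n (off Φ (n+1) + 2*j) j'
                = rowA Φ (n+1) j j' := by
              intro j'; rw [hA, if_neg (by omega), if_pos hieven, hidiv]
            simp only [e]
            exact rowA_sum Φ (Φ.hidden relu x) ((st Φ).hidden relu x n) (n+1) j H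
          have hb : stB Φ (n+1) (off Φ (n+1) + 2*j) = Φ.b (n+1) j := by
            rw [hB, if_pos ⟨by omega, hieven⟩, hidiv]
          rw [hsum, hb, ← hvrw, hvrw, relu_relu, ← hvrw]
        · rw [hidden_st_succ, harst]
          have hiodd : (off Φ (n+1) + 2*j + 1) % 2 ≠ 0 := by have := hoff2 (n+1); omega
          have hsum : ∑ j' ∈ Finset.range (off Φ (n+1)),
              stA Φ (n+1) n (off Φ (n+1) + 2*j + 1) j' * (st Φ).hidden relu x n j' = 0 := by
            refine Finset.sum_eq_zero fun j' _ => ?_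
            rw [hA, if_neg (by omega), if_neg hiodd, zero_mul]
          have hb : stB Φ (n+1) (off Φ (n+1) + 2*j + 1) = 0 := by
            rw [hB, if_neg (by rintro ⟨-, h⟩; exact hiodd h)]
          rw [hsum, hb, add_zero, relu_zero, hvrw, relu_neg_relu]
      · -- carry block, k ≤ n
        have hkn : k ≤ n := by omega
        have hlt : off Φ k + 2*j + 1 < off Φ (n+1) := by
          have h1 : off Φ k + 2*j + 1 < off Φ (k+1) := by rw [off_succ]; omega
          exact lt_of_lt_of_le h1 (off_mono Φ (by omega))
        obtain ⟨Hv, Hv'⟩ := ih hn1 hnL k hkn j hj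
        have heven : (off Φ k + 2*j) % 2 = 0 := by have := hoff2 k; omega
        have main : ∀ i, i < off Φ (n+1) →
            (st Φ).hidden relu x (n+1) i
              = relu ((st Φ).hidden relu x n i
                  - (st Φ).hidden relu x n (2*(i/2) + (1 - i % 2))) := by
          intro i hi
          have hoffe := hoff2 (n+1)
          rw [hidden_st_succ, harst]
          have hb : stB Φ (n+1) i = 0 := by rw [hB, if_neg (by omega)]
          have hpq : i ≠ 2*(i/2) + (1 - i % 2) := by omega
          have e : ∀ j', stA Φ (n+1) n i j' = (if j' = i then (1:ℝ)
              else if j' = 2*(i/2) + (1 - i % 2) then -1 else 0) := by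
            intro j'; rw [hA, if_pos hi]; rfl
          simp only [e]
          rw [sum_pm _ _ _ hpq, hb, add_zero,
            if_pos (Finset.mem_range.2 hi),
            if_pos (Finset.mem_range.2 (by omega : 2*(i/2) + (1 - i % 2) < off Φ (n+1)))]
        constructor
        · rw [main _ (by omega)]
          have h1 : (off Φ k + 2*j) / 2 * 2 = off Φ k + 2*j := by omega
          have e1 : 2*((off Φ k + 2*j)/2) + (1 - (off Φ k + 2*j) % 2)
              = off Φ k + 2*j + 1 := by omega
          rw [e1, Hv, Hv']
          congr 1
          exact relu_sub_relu _
        · rw [main _ (by omega)]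
          have e1 : 2*((off Φ k + 2*j + 1)/2) + (1 - (off Φ k + 2*j + 1) % 2)
              = off Φ k + 2*j := by omega
          rw [e1, Hv, Hv']
          congr 1
          have := relu_sub_relu (-(Φ.hidden relu x k j))
          rw [neg_neg] at this
          linarith

end StdConv
namespace StdConv

lemma st_realize (Φ : NN) (x : ℕ → ℝ) (i : ℕ) :
    (st Φ).realize relu x i = Φ.realize relu x i := by
  have hL := Φ.hL
  unfold NN.realize
  simp only [st_L, st_arity, st_A, st_b]
  erw [Fin.sum_univ_eq_sum_range (fun m => ∑ j ∈ Finset.range (stArity Φ m),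
      stA Φ Φ.L m i j * (st Φ).hidden relu x m j) Φ.L,
    Fin.sum_univ_eq_sum_range (fun m => ∑ j ∈ Finset.range (Φ.arity m),
      Φ.A Φ.L m i j * Φ.hidden relu x m j) Φ.L]
  have hb : stB Φ Φ.L i = Φ.b Φ.L i := by
    unfold stB; rw [if_pos ⟨hL, le_refl _⟩, if_pos rfl]
  rw [hb]
  congr 1
  by_cases hL1 : Φ.L = 1
  · rw [hL1, Finset.sum_range_one, Finset.sum_range_one]
    have har0 : stArity Φ 0 = Φ.d := by simp [stArity]
    rw [har0, ← Φ.harity]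
    refine Finset.sum_congr rfl fun j _ => ?_
    have hA : stA Φ 1 0 i j = Φ.A 1 0 i j := by
      unfold stA
      rw [if_pos ⟨rfl, Φ.hL⟩, if_pos hL1.symm, if_pos hL1]
    rw [hA, hidden_zero, hidden_zero, st_d]
  · rw [Finset.sum_eq_single_of_mem (Φ.L - 1) (Finset.mem_range.2 (by omega))]
    · have hL2 : 2 ≤ Φ.L := by omega
      have har : stArity Φ (Φ.L - 1) = off Φ Φ.L := by
        unfold stArity
        rw [if_neg (by omega), if_neg (by omega), show Φ.L - 1 + 1 = Φ.L from by omega]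
      have hA : ∀ j, stA Φ Φ.L (Φ.L - 1) i j = rowA Φ Φ.L i j := by
        intro j; unfold stA
        rw [if_pos ⟨by omega, le_refl _⟩, if_pos rfl, if_neg hL1]
      have H : ∀ k < Φ.L, ∀ j < Φ.arity k,
          (st Φ).hidden relu x (Φ.L - 1) (off Φ k + 2*j) = relu (Φ.hidden relu x k j) ∧
          (st Φ).hidden relu x (Φ.L - 1) (off Φ k + 2*j + 1)
            = relu (-(Φ.hidden relu x k j)) := by
        intro k hk j hj
        exact inv Φ x (Φ.L - 1) (by omega) (by omega) k (by omega) j hj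
      rw [har]
      rw [Finset.sum_congr rfl (fun j _ => by rw [hA])]
      exact rowA_sum Φ (Φ.hidden relu x) ((st Φ).hidden relu x (Φ.L - 1)) Φ.L i H
    · intro b hb' hbn
      refine Finset.sum_eq_zero fun j _ => ?_
      have hz : stA Φ Φ.L b i j = 0 := by
        unfold stA; rw [if_neg]; rintro ⟨h1, -⟩
        rw [Finset.mem_range] at hb'; omega
      rw [hz, zero_mul]

lemma st_isStandard (Φ : NN) : (st Φ).IsStandard := by
  intro l k hl hkl i j _ _
  show stA Φ l k i j = 0
  unfold stA; rw [if_neg]; rintro ⟨h1, -⟩; omega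

lemma st_outDim (Φ : NN) : (st Φ).outDim = Φ.outDim := by
  have hL := Φ.hL
  unfold NN.outDim
  simp only [st_L, st_arity]
  unfold stArity
  rw [if_neg (by omega), if_pos rfl]

lemma st_numNeurons (Φ : NN) : (st Φ).numNeurons ≤ 4 * Φ.L * Φ.numNeurons := by
  have hL := Φ.hL
  unfold NN.numNeurons
  simp only [st_L, st_arity]
  have h1 : ∀ l ∈ Finset.range (Φ.L + 1), stArity Φ l ≤ 2 * Φ.numNeurons := by
    intro l hl; rw [Finset.mem_range] at hl
    have hsingle : ∀ m ≤ Φ.L, Φ.arity m ≤ Φ.numNeurons := fun m hm =>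
      Finset.single_le_sum (f := Φ.arity) (fun _ _ => Nat.zero_le _)
        (Finset.mem_range.2 (by omega))
    unfold stArity
    split_ifs with h0 hLl
    · have := hsingle 0 (by omega); rw [Φ.harity] at this; omega
    · have := hsingle Φ.L (le_refl _); omega
    · unfold off NN.numNeurons
      have : ∑ m ∈ Finset.range (l+1), Φ.arity m ≤ ∑ m ∈ Finset.range (Φ.L+1), Φ.arity m :=
        Finset.sum_le_sum_of_subset (Finset.range_subset_range.2 (by omega))
      omega
  calc ∑ l ∈ Finset.range (Φ.L+1), stArity Φ l
      ≤ ∑ _l ∈ Finset.range (Φ.L+1), 2 * Φ.numNeurons := Finset.sum_le_sum h1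
    _ = (Φ.L+1) * (2 * Φ.numNeurons) := by
        rw [Finset.sum_const, Finset.card_range, smul_eq_mul]
    _ ≤ 4 * Φ.L * Φ.numNeurons := by nlinarith

end StdConv
namespace StdConv

def wA (Φ : NN) (t k : ℕ) : Finset (ℕ × ℕ) :=
  (Finset.range (Φ.arity t) ×ˢ Finset.range (Φ.arity k)).filter fun p => Φ.A t k p.1 p.2 ≠ 0

def wB (Φ : NN) (t : ℕ) : Finset ℕ :=
  (Finset.range (Φ.arity t)).filter fun i => Φ.b t i ≠ 0

lemma ncard_pairs (a b : ℕ) (f : ℕ → ℕ → ℝ) :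
    {p : ℕ × ℕ | p.1 < a ∧ p.2 < b ∧ f p.1 p.2 ≠ 0}.ncard
      = ((Finset.range a ×ˢ Finset.range b).filter fun p => f p.1 p.2 ≠ 0).card := by
  rw [← Set.ncard_coe_finset]
  congr 1
  ext ⟨i, j⟩
  simp [Finset.mem_filter, Finset.mem_product, and_assoc]

lemma ncard_bias (a : ℕ) (g : ℕ → ℝ) :
    {i : ℕ | i < a ∧ g i ≠ 0}.ncard = ((Finset.range a).filter fun i => g i ≠ 0).card := by
  rw [← Set.ncard_coe_finset]
  congr 1
  ext i
  simp [Finset.mem_filter]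

lemma numWeights_eq (Φ : NN) : Φ.numWeights
    = ∑ t ∈ Finset.Icc 1 Φ.L, ((∑ k ∈ Finset.range t, (wA Φ t k).card) + (wB Φ t).card) := by
  unfold NN.numWeights wA wB
  simp only [ncard_pairs, ncard_bias]

lemma card_rowA_le (Φ : NN) (t : ℕ) (e : ℕ → ℕ) (S : Finset (ℕ × ℕ))
    (hS : ∀ p ∈ S, ∃ i' k j', k < t ∧ i' < Φ.arity t ∧ j' < Φ.arity k ∧
      Φ.A t k i' j' ≠ 0 ∧ p.1 = e i' ∧
      (p.2 = off Φ k + 2*j' ∨ p.2 = off Φ k + 2*j' + 1)) :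
    S.card ≤ 2 * ∑ k ∈ Finset.range t, (wA Φ t k).card := by
  have hsub : S ⊆ (Finset.range t).biUnion (fun k =>
      (wA Φ t k).image (fun q => (e q.1, off Φ k + 2*q.2)) ∪
      (wA Φ t k).image (fun q => (e q.1, off Φ k + 2*q.2 + 1))) := by
    intro p hp
    obtain ⟨i', k, j', hk, hi', hj', hA, hp1, hp2⟩ := hS p hp
    refine Finset.mem_biUnion.2 ⟨k, Finset.mem_range.2 hk, ?_⟩
    have hm : (i', j') ∈ wA Φ t k := by
      simp [wA, Finset.mem_filter, Finset.mem_product, hi', hj', hA]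
    rcases hp2 with h2 | h2
    · refine Finset.mem_union_left _ (Finset.mem_image.2 ⟨(i', j'), hm, ?_⟩)
      obtain ⟨p1, p2⟩ := p
      simp only at hp1 h2
      rw [hp1, h2]
    · refine Finset.mem_union_right _ (Finset.mem_image.2 ⟨(i', j'), hm, ?_⟩)
      obtain ⟨p1, p2⟩ := p
      simp only at hp1 h2
      rw [hp1, h2]
  calc S.card ≤ _ := Finset.card_le_card hsub
    _ ≤ ∑ k ∈ Finset.range t,
        ((wA Φ t k).image (fun q => (e q.1, off Φ k + 2*q.2)) ∪
         (wA Φ t k).image (fun q => (e q.1, off Φ k + 2*q.2 + 1))).card :=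
        Finset.card_biUnion_le
    _ ≤ ∑ k ∈ Finset.range t, 2 * (wA Φ t k).card := by
        refine Finset.sum_le_sum fun k _ => ?_
        have h1 := Finset.card_image_le (s := wA Φ t k)
          (f := fun q : ℕ × ℕ => (e q.1, off Φ k + 2*q.2))
        have h2 := Finset.card_image_le (s := wA Φ t k)
          (f := fun q : ℕ × ℕ => (e q.1, off Φ k + 2*q.2 + 1))
        have h3 := Finset.card_union_le
          ((wA Φ t k).image (fun q => (e q.1, off Φ k + 2*q.2)))
          ((wA Φ t k).image (fun q => (e q.1, off Φ k + 2*q.2 + 1)))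
        omega
    _ = 2 * ∑ k ∈ Finset.range t, (wA Φ t k).card := (Finset.mul_sum _ _ _).symm

lemma off_le_N (Φ : NN) {t : ℕ} (ht : t ≤ Φ.L) : off Φ t ≤ 2 * Φ.numNeurons := by
  unfold off NN.numNeurons
  exact Nat.mul_le_mul_left 2 (Finset.sum_le_sum_of_subset (Finset.range_subset_range.2 (by omega)))

end StdConv
namespace StdConv

lemma mem_wA_st {Φ : NN} {t k : ℕ} {p : ℕ × ℕ} :
    p ∈ wA (st Φ) t k ↔ p.1 < stArity Φ t ∧ p.2 < stArity Φ k ∧ stA Φ t k p.1 p.2 ≠ 0 := by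
  rw [wA, Finset.mem_filter]
  simp [Finset.mem_product, and_assoc]

lemma mem_wA {Φ : NN} {t k : ℕ} {p : ℕ × ℕ} :
    p ∈ wA Φ t k ↔ p.1 < Φ.arity t ∧ p.2 < Φ.arity k ∧ Φ.A t k p.1 p.2 ≠ 0 := by
  simp [wA, Finset.mem_filter, Finset.mem_product, and_assoc]

lemma rowA_decode {Φ : NN} {t i j : ℕ} (h : rowA Φ t i j ≠ 0) :
    ∃ k < t, off Φ k ≤ j ∧ j < off Φ (k+1) ∧ Φ.A t k i ((j - off Φ k)/2) ≠ 0 := by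
  obtain ⟨k, hk, hne⟩ := Finset.exists_ne_zero_of_sum_ne_zero h
  rw [Finset.mem_range] at hk
  by_cases hc : off Φ k ≤ j ∧ j < off Φ (k+1)
  · rw [if_pos hc] at hne
    exact ⟨k, hk, hc.1, hc.2, right_ne_zero_of_mul hne⟩
  · rw [if_neg hc] at hne; exact absurd rfl hne

lemma card_wB_le (Φ : NN) (t : ℕ) (ht1 : 1 ≤ t) (htL : t ≤ Φ.L) :
    (wB (st Φ) t).card ≤ (wB Φ t).card := by
  have hL := Φ.hL
  by_cases htL' : t = Φ.L
  · subst htL'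
    apply Finset.card_le_card
    intro i hi
    rw [wB, Finset.mem_filter] at hi ⊢
    simp only [Finset.mem_range, st_arity, st_b] at hi ⊢
    have harL : stArity Φ Φ.L = Φ.arity Φ.L := by
      unfold stArity; rw [if_neg (by omega), if_pos rfl]
    have hstB : stB Φ Φ.L i = Φ.b Φ.L i := by
      unfold stB; rw [if_pos ⟨hL, le_refl _⟩, if_pos rfl]
    exact ⟨harL ▸ hi.1, by rw [← hstB]; exact hi.2⟩
  · have har : stArity Φ t = off Φ (t+1) := by
      unfold stArity; rw [if_neg (by omega), if_neg htL']
    calc (wB (st Φ) t).card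
        ≤ ((wB Φ t).image (fun i' => off Φ t + 2*i')).card := by
          apply Finset.card_le_card
          intro i hi
          rw [wB, Finset.mem_filter] at hi
          simp only [Finset.mem_range, st_arity, st_b] at hi
          obtain ⟨hlt, hne⟩ := hi
          rw [har] at hlt
          have hstB : stB Φ t i
              = if off Φ t ≤ i ∧ i % 2 = 0 then Φ.b t ((i - off Φ t)/2) else 0 := by
            unfold stB; rw [if_pos ⟨ht1, htL⟩, if_neg htL']
          rw [hstB] at hne
          by_cases hc : off Φ t ≤ i ∧ i % 2 = 0
          · rw [if_pos hc] at hne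
            have hoe := off_even Φ t
            have hoff := off_succ Φ t
            refine Finset.mem_image.2 ⟨(i - off Φ t)/2, ?_, by omega⟩
            simp only [wB, Finset.mem_filter, Finset.mem_range]
            exact ⟨by omega, hne⟩
          · rw [if_neg hc] at hne; exact absurd rfl hne
      _ ≤ (wB Φ t).card := Finset.card_image_le

lemma card_wA_st_le (Φ : NN) (t : ℕ) (ht1 : 1 ≤ t) (htL : t ≤ Φ.L) :
    (wA (st Φ) t (t-1)).card
      ≤ 4 * Φ.numNeurons + 2 * ∑ k ∈ Finset.range t, (wA Φ t k).card := by
  have hL := Φ.hL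
  by_cases htL' : t = Φ.L
  · subst htL'
    by_cases hL1 : Φ.L = 1
    · -- t = L = 1
      have h1 : (wA (st Φ) Φ.L (Φ.L - 1)).card ≤ (wA Φ Φ.L 0).card := by
        apply Finset.card_le_card
        intro p hp
        rw [mem_wA_st] at hp
        obtain ⟨h1, h2, h3⟩ := hp
        rw [show Φ.L - 1 = 0 from by omega] at h2 h3
        have harL : stArity Φ Φ.L = Φ.arity Φ.L := by
          unfold stArity; rw [if_neg (by omega), if_pos rfl]
        have har0 : stArity Φ 0 = Φ.arity 0 := by simp [stArity, Φ.harity]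
        have hstA : stA Φ Φ.L 0 p.1 p.2 = Φ.A Φ.L 0 p.1 p.2 := by
          unfold stA
          rw [if_pos ⟨by omega, le_refl _⟩, if_pos rfl, if_pos hL1, hL1]
        rw [mem_wA]
        exact ⟨harL ▸ h1, har0 ▸ h2, by rw [← hstA]; exact h3⟩
      have h2 : (wA Φ Φ.L 0).card ≤ ∑ k ∈ Finset.range Φ.L, (wA Φ Φ.L k).card := by
        rw [hL1, Finset.sum_range_one]
      omega
    · -- t = L ≥ 2
      have hbound := card_rowA_le Φ Φ.L id (wA (st Φ) Φ.L (Φ.L - 1)) ?_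
      · omega
      intro p hp
      rw [mem_wA_st] at hp
      obtain ⟨h1, h2, h3⟩ := hp
      have harL : stArity Φ Φ.L = Φ.arity Φ.L := by
        unfold stArity; rw [if_neg (by omega), if_pos rfl]
      have hstA : stA Φ Φ.L (Φ.L - 1) p.1 p.2 = rowA Φ Φ.L p.1 p.2 := by
        unfold stA
        rw [if_pos ⟨by omega, le_refl _⟩, if_pos rfl, if_neg hL1]
      rw [hstA] at h3
      obtain ⟨k, hk, hj1, hj2, hA⟩ := rowA_decode h3
      have hoe := off_even Φ k
      have hoff := off_succ Φ k
      exact ⟨p.1, k, (p.2 - off Φ k)/2, hk, harL ▸ h1, by omega, hA, rfl, by omega⟩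
  · -- t < L
    have htL2 : t < Φ.L := by omega
    have har : stArity Φ t = off Φ (t+1) := by
      unfold stArity; rw [if_neg (by omega), if_neg htL']
    have hoffN : off Φ t ≤ 2 * Φ.numNeurons := off_le_N Φ (by omega)
    by_cases ht1' : t = 1
    · -- t = 1 < L
      subst ht1'
      have hred : (1:ℕ) - 1 = 0 := rfl
      rw [hred]
      have hstA : ∀ i j, stA Φ 1 0 i j =
          (if i < 2 * Φ.d then (if j = i / 2 then sgnR i else 0)
           else if i % 2 = 0 then Φ.A 1 0 ((i - 2 * Φ.d) / 2) j else 0) := by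
        intro i j; unfold stA
        rw [if_pos ⟨rfl, hL⟩, if_neg (Ne.symm (by omega)), if_pos rfl]
      have hsub : wA (st Φ) 1 0 ⊆
          (Finset.range (2*Φ.d)).image (fun i => (i, i/2)) ∪
          (wA Φ 1 0).image (fun q => (2*Φ.d + 2*q.1, q.2)) := by
        intro p hp
        rw [mem_wA_st] at hp
        obtain ⟨h1, h2, h3⟩ := hp
        rw [hstA] at h3
        have har0 : stArity Φ 0 = Φ.arity 0 := by simp [stArity, Φ.harity]
        by_cases hc : p.1 < 2*Φ.d
        · rw [if_pos hc] at h3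
          refine Finset.mem_union_left _ (Finset.mem_image.2 ⟨p.1, Finset.mem_range.2 hc, ?_⟩)
          by_cases hc2 : p.2 = p.1/2
          · obtain ⟨a, b⟩ := p; simp only at hc2 ⊢; rw [hc2]
          · rw [if_neg hc2] at h3; exact absurd rfl h3
        · rw [if_neg hc] at h3
          by_cases hc2 : p.1 % 2 = 0
          · rw [if_pos hc2] at h3
            rw [har, off_succ, off_one] at h1
            refine Finset.mem_union_right _ (Finset.mem_image.2
              ⟨((p.1 - 2*Φ.d)/2, p.2), ?_, ?_⟩)
            · rw [mem_wA]
              exact ⟨by omega, har0 ▸ h2, h3⟩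
            · obtain ⟨a, b⟩ := p; simp only at hc hc2 h1 ⊢
              simp only [Prod.mk.injEq]
              exact ⟨by omega, trivial⟩
          · rw [if_neg hc2] at h3; exact absurd rfl h3
      have hcard := Finset.card_le_card hsub
      have hc1 := Finset.card_union_le
        ((Finset.range (2*Φ.d)).image (fun i => (i, i/2)))
        ((wA Φ 1 0).image (fun q : ℕ × ℕ => (2*Φ.d + 2*q.1, q.2)))
      have hc2 := Finset.card_image_le (s := Finset.range (2*Φ.d)) (f := fun i => (i, i/2))
      have hc3 := Finset.card_image_le (s := wA Φ 1 0)
        (f := fun q : ℕ × ℕ => (2*Φ.d + 2*q.1, q.2))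
      have hc4 : (wA Φ 1 0).card ≤ ∑ k ∈ Finset.range 1, (wA Φ 1 k).card := by
        rw [Finset.sum_range_one]
      have hc5 : 2*Φ.d = off Φ 1 := (off_one Φ).symm
      have hc6 : off Φ 1 ≤ 2 * Φ.numNeurons := off_le_N Φ (by omega)
      rw [Finset.card_range] at hc2
      omega
    · -- 2 ≤ t < L
      have ht2 : 2 ≤ t := by omega
      have hstA : ∀ i j, stA Φ t (t-1) i j =
          (if i < off Φ t then carryA i j
           else if i % 2 = 0 then rowA Φ t ((i - off Φ t) / 2) j else 0) := by
        intro i j; unfold stA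
        rw [if_pos ⟨by omega, htL⟩, if_neg htL', if_neg ht1']
      set S := wA (st Φ) t (t-1) with hS
      have hsplit := Finset.card_filter_add_card_filter_not
        (s := S) (p := fun p => p.1 < off Φ t)
      have hcarry : (S.filter (fun p => p.1 < off Φ t)).card ≤ 2 * off Φ t := by
        have hsub : S.filter (fun p => p.1 < off Φ t) ⊆
            (Finset.range (off Φ t)).image (fun i => (i, i)) ∪
            (Finset.range (off Φ t)).image (fun i => (i, 2*(i/2) + (1 - i%2))) := by
          intro p hp
          rw [Finset.mem_filter] at hp
          obtain ⟨hpS, hplt⟩ := hp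
          rw [hS, mem_wA_st] at hpS
          obtain ⟨h1, h2, h3⟩ := hpS
          rw [hstA, if_pos hplt] at h3
          unfold carryA at h3
          by_cases hc1 : p.2 = p.1
          · refine Finset.mem_union_left _ (Finset.mem_image.2
              ⟨p.1, Finset.mem_range.2 hplt, ?_⟩)
            obtain ⟨a,b⟩ := p; simp only at hc1 ⊢; rw [hc1]
          · rw [if_neg hc1] at h3
            by_cases hc2 : p.2 = 2*(p.1/2) + (1 - p.1 % 2)
            · refine Finset.mem_union_right _ (Finset.mem_image.2
                ⟨p.1, Finset.mem_range.2 hplt, ?_⟩)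
              obtain ⟨a,b⟩ := p; simp only at hc2 ⊢; rw [hc2]
            · rw [if_neg hc2] at h3; exact absurd rfl h3
        have := Finset.card_le_card hsub
        have hu := Finset.card_union_le
          ((Finset.range (off Φ t)).image (fun i => (i, i)))
          ((Finset.range (off Φ t)).image (fun i => (i, 2*(i/2) + (1 - i%2))))
        have hi1 := Finset.card_image_le (s := Finset.range (off Φ t)) (f := fun i => (i, i))
        have hi2 := Finset.card_image_le (s := Finset.range (off Φ t))
          (f := fun i => (i, 2*(i/2) + (1 - i%2)))
        rw [Finset.card_range] at hi1 hi2
        omega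
      have hnew : (S.filter (fun p => ¬ p.1 < off Φ t)).card
          ≤ 2 * ∑ k ∈ Finset.range t, (wA Φ t k).card := by
        apply card_rowA_le Φ t (fun i' => off Φ t + 2*i')
        intro p hp
        rw [Finset.mem_filter] at hp
        obtain ⟨hpS, hplt⟩ := hp
        rw [hS, mem_wA_st] at hpS
        obtain ⟨h1, h2, h3⟩ := hpS
        rw [hstA, if_neg hplt] at h3
        by_cases hc2 : p.1 % 2 = 0
        · rw [if_pos hc2] at h3
          obtain ⟨k, hk, hj1, hj2, hA⟩ := rowA_decode h3
          rw [har, off_succ] at h1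
          have hoet := off_even Φ t
          have hoek := off_even Φ k
          have hoffk := off_succ Φ k
          exact ⟨(p.1 - off Φ t)/2, k, (p.2 - off Φ k)/2, hk, by omega, by omega, hA,
            by omega, by omega⟩
        · rw [if_neg hc2] at h3; exact absurd rfl h3
      omega

lemma st_numWeights (Φ : NN) :
    (st Φ).numWeights ≤ 4 * (Φ.L * Φ.numNeurons) + 2 * Φ.numWeights := by
  rw [numWeights_eq, numWeights_eq]
  have hstL : (st Φ).L = Φ.L := rfl
  rw [hstL]
  have hper : ∀ t ∈ Finset.Icc 1 Φ.L,
      (∑ k ∈ Finset.range t, (wA (st Φ) t k).card) + (wB (st Φ) t).card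
        ≤ 4 * Φ.numNeurons
          + 2 * ((∑ k ∈ Finset.range t, (wA Φ t k).card) + (wB Φ t).card) := by
    intro t ht
    rw [Finset.mem_Icc] at ht
    obtain ⟨ht1, htL⟩ := ht
    have hsum : ∑ k ∈ Finset.range t, (wA (st Φ) t k).card
        = (wA (st Φ) t (t-1)).card := by
      apply Finset.sum_eq_single_of_mem (t-1) (Finset.mem_range.2 (by omega))
      intro b hb hbn
      rw [Finset.mem_range] at hb
      rw [Finset.card_eq_zero, Finset.eq_empty_iff_forall_notMem]
      intro p hp
      rw [mem_wA_st] at hp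
      refine hp.2.2 ?_
      unfold stA; rw [if_neg]; rintro ⟨hc, -⟩; omega
    rw [hsum]
    have h1 := card_wA_st_le Φ t ht1 htL
    have h2 := card_wB_le Φ t ht1 htL
    omega
  calc ∑ t ∈ Finset.Icc 1 Φ.L,
        ((∑ k ∈ Finset.range t, (wA (st Φ) t k).card) + (wB (st Φ) t).card)
      ≤ ∑ t ∈ Finset.Icc 1 Φ.L, (4 * Φ.numNeurons
          + 2 * ((∑ k ∈ Finset.range t, (wA Φ t k).card) + (wB Φ t).card)) :=
        Finset.sum_le_sum hper
    _ = (Finset.Icc 1 Φ.L).card * (4 * Φ.numNeurons)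
        + 2 * ∑ t ∈ Finset.Icc 1 Φ.L,
            ((∑ k ∈ Finset.range t, (wA Φ t k).card) + (wB Φ t).card) := by
        rw [Finset.sum_add_distrib, Finset.sum_const, smul_eq_mul, Finset.mul_sum]
    _ ≤ 4 * (Φ.L * Φ.numNeurons) + 2 * ∑ t ∈ Finset.Icc 1 Φ.L,
            ((∑ k ∈ Finset.range t, (wA Φ t k).card) + (wB Φ t).card) := by
        rw [Nat.card_Icc]
        have : Φ.L + 1 - 1 = Φ.L := by omega
        rw [this]
        ring_nf
        omega

end StdConv

/-- **Conversion to standard networks.**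
There are absolute constants `C₁, C₂ > 0` such that every ReLU network `Φ` can be
realized by a standard network `Φst` with the same input dimension and number of layers,
at most `C₁·L·N` neurons and at most `C₂·(L·N + M)` nonzero weights. -/
theorem network_to_standard_network :
    ∃ C₁ C₂ : ℝ, 0 < C₁ ∧ 0 < C₂ ∧
      ∀ Φ : NN, ∃ Φst : NN, Φst.IsStandard ∧ Φst.d = Φ.d ∧ Φst.L = Φ.L ∧
        Φst.outDim = Φ.outDim ∧
        (Φst.numNeurons : ℝ) ≤ C₁ * Φ.L * Φ.numNeurons ∧
        (Φst.numWeights : ℝ) ≤ C₂ * (Φ.L * Φ.numNeurons + Φ.numWeights) ∧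
        ∀ x : ℕ → ℝ, ∀ i < Φ.outDim, Φst.realize relu x i = Φ.realize relu x i := by
  refine ⟨4, 4, by norm_num, by norm_num, fun Φ =>
    ⟨StdConv.st Φ, StdConv.st_isStandard Φ, rfl, rfl, StdConv.st_outDim Φ, ?_, ?_,
      fun x i _ => StdConv.st_realize Φ x i⟩⟩
  · have h := StdConv.st_numNeurons Φ
    calc ((StdConv.st Φ).numNeurons : ℝ)
        ≤ ((4 * Φ.L * Φ.numNeurons : ℕ) : ℝ) := by exact_mod_cast h
      _ = 4 * Φ.L * Φ.numNeurons := by push_cast; ring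
  · have h := StdConv.st_numWeights Φ
    have h2 : (StdConv.st Φ).numWeights ≤ 4 * (Φ.L * Φ.numNeurons + Φ.numWeights) := by omega
    calc ((StdConv.st Φ).numWeights : ℝ)
        ≤ ((4 * (Φ.L * Φ.numNeurons + Φ.numWeights) : ℕ) : ℝ) := by exact_mod_cast h2
      _ = 4 * (Φ.L * Φ.numNeurons + Φ.numWeights) := by push_cast; ring


end
end

section
/- For every M ≥ 1 there exist constants c, c₁ > 0 and c₂ = c₂(M) > 0 such that for every ε ∈ (0, 1/2) there is a neural network ×̃_ε with two-dimensional input and one-dimensional output whose ReLU realization h := R_ρ(×̃_ε) satisfies: (1) sup_{(x,y)∈[−M,M]²} |h(x,y) − x·y| ≤ ε and the function (x,y) ↦ h(x,y) − x·y is ε-Lipschitz on [−M,M]² with respect to the ℓ¹-norm on ℝ²; (2) h(x,0) = 0 and h(0,y) = 0 for all x, y ∈ [−M,M]; (3) h is c·M-Lipschitz on [−M,M]² with respect to the ℓ¹-norm; and (4) the number of layers, neurons and nonzero weights of ×̃_ε are each at most c₁·log₂(1/ε) + c₂. -/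
noncomputable section

open Finset

namespace MulNet

/-- The hat function `g(t) = 2 min(t, 1-t)`. -/
def tri (t : ℝ) : ℝ := 2 * min t (1 - t)

lemma relu_nonneg (x : ℝ) : 0 ≤ relu x := le_max_left _ _
lemma relu_of_nonneg {x : ℝ} (h : 0 ≤ x) : relu x = x := max_eq_right h
lemma relu_add_relu_neg (x : ℝ) : relu x + relu (-x) = |x| := by
  rcases le_total 0 x with h | h
  · simp [relu, max_eq_right h, max_eq_left (neg_nonpos_of_nonneg h), abs_of_nonneg h]
  · simp [relu, max_eq_left h, max_eq_right (neg_nonneg_of_nonpos h), abs_of_nonpos h]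

lemma tri_eval {u : ℝ} (h0 : 0 ≤ u) (h1 : u ≤ 1) :
    2 * u - 4 * relu (u - 1/2) = tri u := by
  rcases le_total u (1/2) with h | h
  · rw [relu, max_eq_left (by linarith), tri, min_eq_left (by linarith)]; ring
  · rw [relu, max_eq_right (by linarith), tri, min_eq_right (by linarith)]; ring

lemma tri_mem {u : ℝ} (h0 : 0 ≤ u) (h1 : u ≤ 1) : 0 ≤ tri u ∧ tri u ≤ 1 := by
  rcases le_total u (1/2) with h | h
  · rw [tri, min_eq_left (by linarith)]; constructor <;> linarith
  · rw [tri, min_eq_right (by linarith)]; constructor <;> linarith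

lemma tri_iter_mem {u : ℝ} (h0 : 0 ≤ u) (h1 : u ≤ 1) (s : ℕ) :
    0 ≤ tri^[s] u ∧ tri^[s] u ≤ 1 := by
  induction s with
  | zero => exact ⟨h0, h1⟩
  | succ n ih =>
      rw [Function.iterate_succ_apply']
      exact tri_mem ih.1 ih.2

lemma tri_lip (a b : ℝ) : |tri a - tri b| ≤ 2 * |a - b| := by
  have h := abs_min_sub_min_le_max a (1 - a) b (1 - b)
  have : |(1 - a) - (1 - b)| = |a - b| := by rw [abs_sub_comm]; ring_nf
  rw [this] at h
  calc |tri a - tri b| = 2 * |min a (1-a) - min b (1-b)| := by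
        rw [tri, tri, ← mul_sub, abs_mul]; norm_num
    _ ≤ 2 * max |a - b| |a - b| := by linarith [max_le_iff.mp (le_refl (max |a-b| |a-b|))]
    _ = 2 * |a - b| := by rw [max_self]

lemma tri_zero : tri 0 = 0 := by simp [tri]

/-- The coefficients of the square-approximation expansion. -/
def wcoef (s : ℕ) : ℝ := if s = 0 then 1 else -((1/4 : ℝ)^s)

/-- Yarotsky's approximation of `t ↦ t²` on `[0,1]`. -/
def sqA (m : ℕ) (t : ℝ) : ℝ := ∑ s ∈ Finset.range (m+1), wcoef s * tri^[s] t

lemma sqA_zero (m : ℕ) : sqA m 0 = 0 := by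
  unfold sqA
  apply Finset.sum_eq_zero
  intro s _
  rw [Function.iterate_fixed tri_zero, mul_zero]

lemma sqA_base (t : ℝ) : sqA 0 t = t := by
  simp [sqA, wcoef]

lemma sqA_succ (m : ℕ) (t : ℝ) :
    sqA (m+1) t = t - tri t / 2 + sqA m (tri t) / 4 := by
  have h1 : sqA (m+1) t = t + ∑ s ∈ Finset.range (m+1), wcoef (s+1) * tri^[s] (tri t) := by
    rw [sqA, Finset.sum_range_succ']
    simp only [Function.iterate_succ_apply, Function.iterate_zero_apply, wcoef,
      if_pos rfl, one_mul, if_true]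
    ring
  have h2 : sqA m (tri t) / 4 = ∑ s ∈ Finset.range (m+1), (wcoef s / 4) * tri^[s] (tri t) := by
    rw [sqA, Finset.sum_div]; apply Finset.sum_congr rfl; intro s _; ring
  rw [h1, h2]
  have h3 : ∀ s ∈ Finset.range (m+1), wcoef (s+1) * tri^[s] (tri t)
      = (wcoef s / 4) * tri^[s] (tri t) + (if s = 0 then -(tri t)/2 else 0) := by
    intro s _
    rcases Nat.eq_zero_or_pos s with rfl | hs
    · simp only [wcoef, if_pos rfl, if_neg (Nat.succ_ne_zero 0), Function.iterate_zero_apply,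
        pow_one, if_true]
      ring
    · rw [if_neg (by omega), add_zero, wcoef, wcoef, if_neg (by omega), if_neg (by omega),
        pow_succ]
      ring
  rw [Finset.sum_congr rfl h3, Finset.sum_add_distrib,
    Finset.sum_ite_eq' (Finset.range (m+1)) 0 (fun _ => -(tri t)/2)]
  simp only [Finset.mem_range, Nat.succ_pos, if_true, if_pos trivial]
  ring

/-- The approximation error. -/
def errA (m : ℕ) (t : ℝ) : ℝ := sqA m t - t^2

lemma errA_succ {t : ℝ} (h0 : 0 ≤ t) (h1 : t ≤ 1) (m : ℕ) :
    errA (m+1) t = errA m (tri t) / 4 := by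
  unfold errA
  rw [sqA_succ]
  rcases le_total t (1/2) with h | h
  · rw [tri, min_eq_left (by linarith)]; ring
  · rw [tri, min_eq_right (by linarith)]; ring

lemma errA_bound {t : ℝ} (h0 : 0 ≤ t) (h1 : t ≤ 1) (m : ℕ) :
    |errA m t| ≤ (1/4) * (1/4)^m := by
  induction m generalizing t with
  | zero =>
      simp only [errA, sqA_base, pow_zero, mul_one]
      rw [abs_le]
      constructor <;> nlinarith [sq_nonneg (t - 1/2), sq_nonneg t]
  | succ n ih =>
      rw [errA_succ h0 h1]
      obtain ⟨g0, g1⟩ := tri_mem h0 h1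
      have := ih g0 g1
      rw [abs_div]
      rw [pow_succ]
      rw [abs_of_nonneg (by norm_num : (0:ℝ) ≤ 4)]
      nlinarith [abs_nonneg (errA n (tri t))]

lemma errA_lip {t t' : ℝ} (h0 : 0 ≤ t) (h1 : t ≤ 1) (h0' : 0 ≤ t') (h1' : t' ≤ 1) (m : ℕ) :
    |errA m t - errA m t'| ≤ (1/2)^m * |t - t'| := by
  induction m generalizing t t' with
  | zero =>
      simp only [errA, sqA_base, pow_zero, one_mul]
      have : (t - t^2) - (t' - t'^2) = (t - t') * (1 - t - t') := by ring
      rw [this, abs_mul]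
      have : |1 - t - t'| ≤ 1 := by rw [abs_le]; constructor <;> linarith
      nlinarith [abs_nonneg (t - t')]
  | succ n ih =>
      rw [errA_succ h0 h1, errA_succ h0' h1']
      obtain ⟨g0, g1⟩ := tri_mem h0 h1
      obtain ⟨g0', g1'⟩ := tri_mem h0' h1'
      have h2 := ih g0 g1 g0' g1'
      have h3 := tri_lip t t'
      rw [div_sub_div_same, abs_div, abs_of_nonneg (by norm_num : (0:ℝ) ≤ 4), pow_succ]
      calc |errA n (tri t) - errA n (tri t')| / 4 ≤ ((1/2)^n * (2 * |t - t'|)) / 4 := by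
            apply div_le_div_of_nonneg_right ?_ (by norm_num)
            · exact h2.trans (by nlinarith [pow_nonneg (by norm_num : (0:ℝ) ≤ 1/2) n])
        _ = (1/2)^n * (1/2) * |t - t'| := by ring




-- ### Network construction

def sgn3 (i : ℕ) : ℝ := if i = 0 then 1 else -1

def w1 (i j : ℕ) : ℝ :=
  if j = 0 then
    (if i = 0 then 1 else if i = 1 then -1 else if i = 2 then 1 else if i = 3 then -1 else 0)
  else if j = 1 then
    (if i = 0 then 1 else if i = 1 then -1 else if i = 4 then 1 else if i = 5 then -1 else 0)
  else 0

def net (M : ℝ) (m : ℕ) : NN where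
  d := 2
  L := m + 3
  hL := Nat.succ_pos _
  arity := fun l => if l = 0 then 2 else if l = m + 3 then 1 else 6
  harity := rfl
  A := fun l k i j =>
    if l = 1 ∧ k = 0 then w1 i j
    else if l = 2 ∧ k = 1 then (if j / 2 = i / 2 ∧ j < 6 then 1 / (2 * M) else 0)
    else if 3 ≤ l ∧ l ≤ m + 2 ∧ k + 1 = l then
      (if j / 2 = i / 2 ∧ j < 6 then (if j % 2 = 0 then (2:ℝ) else -4) else 0)
    else if l = m + 3 ∧ i = 0 ∧ 2 ≤ k ∧ k ≤ m + 2 ∧ j % 2 = 0 ∧ j < 6 then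
      2 * M ^ 2 * sgn3 (j / 2) * wcoef (k - 2)
    else 0
  b := fun l i => if 2 ≤ l ∧ l ≤ m + 2 ∧ i % 2 = 1 then -(1/2) else 0

variable (M : ℝ) (m : ℕ)

lemma net_L : (net M m).L = m + 3 := rfl
lemma net_d : (net M m).d = 2 := rfl
lemma net_A (l k i j : ℕ) : (net M m).A l k i j =
    (if l = 1 ∧ k = 0 then w1 i j
    else if l = 2 ∧ k = 1 then (if j / 2 = i / 2 ∧ j < 6 then 1 / (2 * M) else 0)
    else if 3 ≤ l ∧ l ≤ m + 2 ∧ k + 1 = l then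
      (if j / 2 = i / 2 ∧ j < 6 then (if j % 2 = 0 then (2:ℝ) else -4) else 0)
    else if l = m + 3 ∧ i = 0 ∧ 2 ≤ k ∧ k ≤ m + 2 ∧ j % 2 = 0 ∧ j < 6 then
      2 * M ^ 2 * sgn3 (j / 2) * wcoef (k - 2)
    else 0) := rfl
lemma net_b (l i : ℕ) : (net M m).b l i =
    (if 2 ≤ l ∧ l ≤ m + 2 ∧ i % 2 = 1 then -(1/2) else 0) := rfl
lemma net_arity (l : ℕ) : (net M m).arity l =
    (if l = 0 then 2 else if l = m + 3 then 1 else 6) := rfl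

lemma net_arity_le (l : ℕ) : (net M m).arity l ≤ 6 := by
  rw [net_arity]; split
  · omega
  · split <;> omega

lemma net_arity_mid {l : ℕ} (h1 : l ≠ 0) (h2 : l ≠ m + 3) : (net M m).arity l = 6 := by
  rw [net_arity, if_neg h1, if_neg h2]

lemma hidden_succ (Φ : NN) (ρ : ℝ → ℝ) (x : ℕ → ℝ) (l i : ℕ) :
    Φ.hidden ρ x (l+1) i = ρ ((∑ k ∈ Finset.range (l + 1), ∑ j ∈ Finset.range (Φ.arity k),
      Φ.A (l + 1) k i j * Φ.hidden ρ x k j) + Φ.b (l + 1) i) := by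
  rw [NN.hidden]
  exact congrArg ρ (congrArg (fun s => s + Φ.b (l+1) i) (Fin.sum_univ_eq_sum_range
    (fun k => ∑ j ∈ Finset.range (Φ.arity k), Φ.A (l + 1) k i j * Φ.hidden ρ x k j) (l+1)))

lemma realize_eq (Φ : NN) (ρ : ℝ → ℝ) (x : ℕ → ℝ) (i : ℕ) :
    Φ.realize ρ x i = (∑ k ∈ Finset.range Φ.L, ∑ j ∈ Finset.range (Φ.arity k),
      Φ.A Φ.L k i j * Φ.hidden ρ x k j) + Φ.b Φ.L i := by
  rw [NN.realize]
  congr 1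
  exact Fin.sum_univ_eq_sum_range
    (fun k => ∑ j ∈ Finset.range (Φ.arity k), Φ.A Φ.L k i j * Φ.hidden ρ x k j) Φ.L

def inp (x y : ℝ) : ℕ → ℝ := fun i => if i = 0 then x else y

def tv (M x y : ℝ) : ℕ → ℝ :=
  fun i => (if i = 0 then |x + y| else if i = 1 then |x| else |y|) / (2 * M)

variable (x y : ℝ)

lemma hid_zero (j : ℕ) (h : j < 2) :
    (net M m).hidden relu (inp x y) 0 j = inp x y j := by
  rw [NN.hidden]
  exact if_pos h

lemma hid_one (i : ℕ) :
    (net M m).hidden relu (inp x y) 1 i = relu (w1 i 0 * x + w1 i 1 * y) := by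
  rw [hidden_succ, Finset.sum_range_one]
  have ha : (net M m).arity 0 = 2 := rfl
  rw [ha, Finset.sum_range_succ, Finset.sum_range_succ, Finset.sum_range_zero,
    hid_zero M m x y 0 (by omega), hid_zero M m x y 1 (by omega),
    net_A, net_A, net_b, if_pos ⟨rfl, rfl⟩, if_pos ⟨rfl, rfl⟩, if_neg (by omega)]
  norm_num [inp]

lemma hid_one_pair (i : ℕ) (h : i < 3) :
    (net M m).hidden relu (inp x y) 1 (2*i) + (net M m).hidden relu (inp x y) 1 (2*i+1)
      = (if i = 0 then |x + y| else if i = 1 then |x| else |y|) := by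
  interval_cases i
  · simp only [hid_one]
    norm_num [w1]
    rw [show (-x + -y : ℝ) = -(x+y) by ring, relu_add_relu_neg]
  · simp only [hid_one]
    norm_num [w1]
    rw [relu_add_relu_neg]
  · simp only [hid_one]
    norm_num [w1]
    rw [relu_add_relu_neg]

lemma hid_two (i : ℕ) (h : i < 6) :
    (net M m).hidden relu (inp x y) 2 i =
      relu (tv M x y (i / 2) + (if i % 2 = 1 then -(1/2 : ℝ) else 0)) := by
  rw [hidden_succ, Finset.sum_range_succ, Finset.sum_range_one]
  have hz : ∑ j ∈ Finset.range ((net M m).arity 0),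
      (net M m).A 2 0 i j * (net M m).hidden relu (inp x y) 0 j = 0 := by
    apply Finset.sum_eq_zero
    intro j _
    rw [net_A, if_neg (by omega), if_neg (by omega), if_neg (by omega), if_neg (by omega),
      zero_mul]
  rw [hz, zero_add]
  have ha : (net M m).arity 1 = 6 := net_arity_mid M m (by omega) (by omega)
  rw [ha]
  have hA : ∀ j, (net M m).A 2 1 i j = (if j / 2 = i / 2 ∧ j < 6 then 1 / (2 * M) else 0) := by
    intro j
    rw [net_A, if_neg (by omega), if_pos ⟨rfl, rfl⟩]
  have hb : (net M m).b 2 i = (if i % 2 = 1 then -(1/2 : ℝ) else 0) := by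
    rw [net_b]
    rcases Nat.mod_two_eq_zero_or_one i with he | ho
    · rw [if_neg (by omega), if_neg (by omega)]
    · rw [if_pos ⟨by omega, by omega, by omega⟩, if_pos (by omega)]
  rw [hb]
  have hsum : ∑ j ∈ Finset.range 6, (net M m).A 2 1 i j * (net M m).hidden relu (inp x y) 1 j
      = ((net M m).hidden relu (inp x y) 1 (2*(i/2)) +
         (net M m).hidden relu (inp x y) 1 (2*(i/2)+1)) / (2*M) := by
    simp only [Finset.sum_range_succ, Finset.sum_range_zero, hA]
    have h2 : i / 2 < 3 := by omega
    interval_cases hi : (i / 2) <;> norm_num <;> ring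
  rw [hsum, hid_one_pair M m x y (i/2) (by omega), tv]

lemma row_sum (c : ℕ → ℝ) (i : ℕ) (hi : i < 3) :
    ∑ j ∈ Finset.range 6,
        (if j / 2 = i ∧ j < 6 then (if j % 2 = 0 then (2:ℝ) else -4) else 0) * c j
      = 2 * c (2*i) - 4 * c (2*i+1) := by
  interval_cases i <;> norm_num [Finset.sum_range_succ] <;> ring

lemma hid_mid (ht : ∀ i < 3, 0 ≤ tv M x y i ∧ tv M x y i ≤ 1) :
    ∀ s, s ≤ m → ∀ i < 3,
      (net M m).hidden relu (inp x y) (s+2) (2*i) = tri^[s] (tv M x y i) ∧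
      (net M m).hidden relu (inp x y) (s+2) (2*i+1)
        = relu (tri^[s] (tv M x y i) - 1/2) := by
  intro s
  induction s with
  | zero =>
      intro _ i hi
      have h1 := hid_two M m x y (2*i) (by omega)
      have h2 := hid_two M m x y (2*i+1) (by omega)
      have e1 : (2*i) / 2 = i := by omega
      have e2 : (2*i) % 2 = 0 := by omega
      have e3 : (2*i+1) / 2 = i := by omega
      have e4 : (2*i+1) % 2 = 1 := by omega
      rw [e1, e2] at h1
      rw [e3, e4] at h2
      rw [if_neg (by omega)] at h1
      rw [if_pos rfl] at h2
      constructor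
      · rw [show (0:ℕ)+2 = 2 from rfl, h1, add_zero, Function.iterate_zero_apply]
        exact relu_of_nonneg (ht i hi).1
      · rw [show (0:ℕ)+2 = 2 from rfl, h2, Function.iterate_zero_apply, ← sub_eq_add_neg]
  | succ n ih =>
      intro hs i hi
      obtain ⟨ha, hb⟩ := ih (by omega) i hi
      have htv := ht i hi
      have hu : 0 ≤ tri^[n] (tv M x y i) ∧ tri^[n] (tv M x y i) ≤ 1 :=
        tri_iter_mem htv.1 htv.2 n
      have key : ∀ i' : ℕ, i' / 2 = i → i' < 6 →
          (net M m).hidden relu (inp x y) (n+1+2) i' =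
            relu (tri (tri^[n] (tv M x y i)) +
              (if i' % 2 = 1 then -(1/2 : ℝ) else 0)) := by
        intro i' hi' hi6
        rw [show n+1+2 = (n+2)+1 from rfl, hidden_succ]
        rw [Finset.sum_eq_single_of_mem (n+2) (by simp)]
        · have haa : (net M m).arity (n+2) = 6 := net_arity_mid M m (by omega) (by omega)
          rw [haa]
          have hA : ∀ j, (net M m).A (n+2+1) (n+2) i' j =
              (if j / 2 = i ∧ j < 6 then (if j % 2 = 0 then (2:ℝ) else -4) else 0) := by
            intro j
            rw [net_A, if_neg (by omega), if_neg (by omega),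
              if_pos ⟨by omega, by omega, rfl⟩, hi']
          simp only [hA]
          rw [row_sum _ i hi, ha, hb]
          have hbb : (net M m).b (n+2+1) i' =
              (if i' % 2 = 1 then -(1/2 : ℝ) else 0) := by
            rw [net_b]
            rcases Nat.mod_two_eq_zero_or_one i' with he | ho
            · rw [if_neg (by omega), if_neg (by omega)]
            · rw [if_pos ⟨by omega, by omega, ho⟩, if_pos ho]
          rw [hbb, tri_eval hu.1 hu.2]
        · intro k hk hkne
          apply Finset.sum_eq_zero
          intro j _
          rw [net_A, if_neg (by omega), if_neg (by omega),
            if_neg (by omega), if_neg (by omega), zero_mul]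
      constructor
      · have := key (2*i) (by omega) (by omega)
        rw [this, if_neg (by omega), add_zero, Function.iterate_succ_apply']
        exact relu_of_nonneg (tri_mem hu.1 hu.2).1
      · have := key (2*i+1) (by omega) (by omega)
        rw [this, if_pos (by omega), Function.iterate_succ_apply', ← sub_eq_add_neg]

lemma out_row (c : ℕ → ℝ) (w : ℝ) :
    ∑ j ∈ Finset.range 6,
        (if j % 2 = 0 ∧ j < 6 then 2 * M^2 * sgn3 (j / 2) * w else 0) * c j
      = 2 * M^2 * (w * c 0 - w * c 2 - w * c 4) := by
  norm_num [Finset.sum_range_succ, sgn3]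
  ring

lemma net_realize_eq (ht : ∀ i < 3, 0 ≤ tv M x y i ∧ tv M x y i ≤ 1) :
    (net M m).realize relu (inp x y) 0
      = 2 * M^2 * (sqA m (tv M x y 0) - sqA m (tv M x y 1) - sqA m (tv M x y 2)) := by
  rw [realize_eq, net_L]
  have hb : (net M m).b (m+3) 0 = 0 := by rw [net_b, if_neg (by omega)]
  rw [hb, add_zero]
  rw [show m+3 = (m+2)+1 from rfl, Finset.sum_range_succ', Finset.sum_range_succ']
  have h0 : (∑ j ∈ Finset.range ((net M m).arity 0),
      (net M m).A ((m+2)+1) 0 0 j * (net M m).hidden relu (inp x y) 0 j) = 0 := by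
    apply Finset.sum_eq_zero
    intro j _
    rw [net_A, if_neg (by omega), if_neg (by omega), if_neg (by omega), if_neg (by omega),
      zero_mul]
  have h1 : (∑ j ∈ Finset.range ((net M m).arity (0+1)),
      (net M m).A ((m+2)+1) (0+1) 0 j * (net M m).hidden relu (inp x y) (0+1) j) = 0 := by
    apply Finset.sum_eq_zero
    intro j _
    rw [net_A, if_neg (by omega), if_neg (by omega), if_neg (by omega), if_neg (by omega),
      zero_mul]
  rw [h0, h1, add_zero, add_zero]
  have hF : ∀ k ∈ Finset.range (m+1),
      (∑ j ∈ Finset.range ((net M m).arity (k+1+1)),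
        (net M m).A ((m+2)+1) (k+1+1) 0 j * (net M m).hidden relu (inp x y) (k+1+1) j)
      = 2 * M^2 * (wcoef k * tri^[k] (tv M x y 0)) -
        2 * M^2 * (wcoef k * tri^[k] (tv M x y 1)) -
        2 * M^2 * (wcoef k * tri^[k] (tv M x y 2)) := by
    intro k hk
    rw [Finset.mem_range] at hk
    have haa : (net M m).arity (k+1+1) = 6 := net_arity_mid M m (by omega) (by omega)
    rw [haa]
    have hA : ∀ j, (net M m).A ((m+2)+1) (k+1+1) 0 j =
        (if j % 2 = 0 ∧ j < 6 then 2 * M^2 * sgn3 (j / 2) * wcoef k else 0) := by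
      intro j
      rw [net_A, if_neg (by omega), if_neg (by omega), if_neg (by omega),
        show k+1+1-2 = k from by omega]
      by_cases hj : j % 2 = 0 ∧ j < 6
      · rw [if_pos ⟨by omega, rfl, by omega, by omega, hj.1, hj.2⟩, if_pos hj]
      · rw [if_neg (by omega), if_neg hj]
    simp only [hA]
    rw [out_row]
    have hm0 := (hid_mid M m x y ht k (by omega) 0 (by omega)).1
    have hm1 := (hid_mid M m x y ht k (by omega) 1 (by omega)).1
    have hm2 := (hid_mid M m x y ht k (by omega) 2 (by omega)).1
    norm_num at hm0 hm1 hm2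
    rw [show k+1+1 = k+2 from rfl, hm0, hm1, hm2]
    ring
  rw [Finset.sum_congr rfl hF, Finset.sum_sub_distrib, Finset.sum_sub_distrib,
    ← Finset.mul_sum, ← Finset.mul_sum, ← Finset.mul_sum]
  rw [sqA, sqA, sqA]
  ring

-- ### Complexity counts

lemma net_outDim : (net M m).outDim = 1 := by
  rw [NN.outDim, net_L, net_arity, if_neg (by omega), if_pos rfl]

lemma numNeurons_le : (net M m).numNeurons ≤ 6*m + 24 := by
  rw [NN.numNeurons, net_L]
  calc ∑ l ∈ Finset.range (m+3+1), (net M m).arity l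
      ≤ ∑ _l ∈ Finset.range (m+3+1), 6 :=
        Finset.sum_le_sum (fun l _ => net_arity_le M m l)
    _ = 6*m + 24 := by rw [Finset.sum_const, Finset.card_range, smul_eq_mul]; omega

lemma Wset_le (l k : ℕ) :
    {p : ℕ × ℕ | p.1 < (net M m).arity l ∧ p.2 < (net M m).arity k ∧
      (net M m).A l k p.1 p.2 ≠ 0}.ncard ≤ 36 := by
  have hsub : {p : ℕ × ℕ | p.1 < (net M m).arity l ∧ p.2 < (net M m).arity k ∧
      (net M m).A l k p.1 p.2 ≠ 0} ⊆ ↑(Finset.range 6 ×ˢ Finset.range 6) := by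
    intro p hp
    simp only [Set.mem_setOf_eq] at hp
    simp only [Finset.coe_product, Set.mem_prod, Finset.mem_coe, Finset.mem_range]
    exact ⟨lt_of_lt_of_le hp.1 (net_arity_le M m l), lt_of_lt_of_le hp.2.1 (net_arity_le M m k)⟩
  calc {p : ℕ × ℕ | p.1 < (net M m).arity l ∧ p.2 < (net M m).arity k ∧
      (net M m).A l k p.1 p.2 ≠ 0}.ncard
      ≤ (↑(Finset.range 6 ×ˢ Finset.range 6) : Set (ℕ × ℕ)).ncard :=
        Set.ncard_le_ncard hsub (Finset.finite_toSet _)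
    _ = 36 := by rw [Set.ncard_coe_finset]; decide

lemma Wset_zero (l k : ℕ) (h : ∀ i j, (net M m).A l k i j = 0) :
    {p : ℕ × ℕ | p.1 < (net M m).arity l ∧ p.2 < (net M m).arity k ∧
      (net M m).A l k p.1 p.2 ≠ 0}.ncard = 0 := by
  have he : {p : ℕ × ℕ | p.1 < (net M m).arity l ∧ p.2 < (net M m).arity k ∧
      (net M m).A l k p.1 p.2 ≠ 0} = ∅ := by
    ext p
    simp [h p.1 p.2]
  rw [he, Set.ncard_empty]

lemma Bset_le (l : ℕ) :
    {i : ℕ | i < (net M m).arity l ∧ (net M m).b l i ≠ 0}.ncard ≤ 6 := by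
  have hsub : {i : ℕ | i < (net M m).arity l ∧ (net M m).b l i ≠ 0} ⊆
      ↑(Finset.range 6) := by
    intro i hi
    simp only [Set.mem_setOf_eq] at hi
    simp only [Finset.coe_range, Set.mem_Iio]
    exact lt_of_lt_of_le hi.1 (net_arity_le M m l)
  calc {i : ℕ | i < (net M m).arity l ∧ (net M m).b l i ≠ 0}.ncard
      ≤ (↑(Finset.range 6) : Set ℕ).ncard := Set.ncard_le_ncard hsub (Finset.finite_toSet _)
    _ = 6 := by rw [Set.ncard_coe_finset, Finset.card_range]

lemma numWeights_le : (net M m).numWeights ≤ 78*m + 198 := by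
  rw [NN.numWeights, net_L]
  rw [Finset.sum_Icc_succ_top (by omega : 1 ≤ m + 3)]
  have hmid : ∀ l ∈ Finset.Icc 1 (m+2),
      ((∑ k ∈ Finset.range l, {p : ℕ × ℕ | p.1 < (net M m).arity l ∧
          p.2 < (net M m).arity k ∧ (net M m).A l k p.1 p.2 ≠ 0}.ncard) +
        {i : ℕ | i < (net M m).arity l ∧ (net M m).b l i ≠ 0}.ncard) ≤ 42 := by
    intro l hl
    rw [Finset.mem_Icc] at hl
    have hsum : (∑ k ∈ Finset.range l, {p : ℕ × ℕ | p.1 < (net M m).arity l ∧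
        p.2 < (net M m).arity k ∧ (net M m).A l k p.1 p.2 ≠ 0}.ncard) ≤ 36 := by
      calc (∑ k ∈ Finset.range l, {p : ℕ × ℕ | p.1 < (net M m).arity l ∧
            p.2 < (net M m).arity k ∧ (net M m).A l k p.1 p.2 ≠ 0}.ncard)
          ≤ ∑ k ∈ Finset.range l, (if k = l - 1 then 36 else 0) := by
            apply Finset.sum_le_sum
            intro k hk
            rw [Finset.mem_range] at hk
            by_cases hkl : k = l - 1
            · rw [if_pos hkl]; exact Wset_le M m l k
            · rw [if_neg hkl, Wset_zero M m l k]
              intro i j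
              rw [net_A, if_neg (by omega), if_neg (by omega), if_neg (by omega),
                if_neg (by omega)]
        _ = 36 := by
            rw [Finset.sum_ite_eq' (Finset.range l) (l-1) (fun _ => 36),
              if_pos (Finset.mem_range.mpr (by omega))]
    have hbias := Bset_le M m l
    omega
  have h1 : (∑ l ∈ Finset.Icc 1 (m+2),
      ((∑ k ∈ Finset.range l, {p : ℕ × ℕ | p.1 < (net M m).arity l ∧
          p.2 < (net M m).arity k ∧ (net M m).A l k p.1 p.2 ≠ 0}.ncard) +
        {i : ℕ | i < (net M m).arity l ∧ (net M m).b l i ≠ 0}.ncard)) ≤ 42 * (m+2) := by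
    calc _ ≤ ∑ _l ∈ Finset.Icc 1 (m+2), 42 := Finset.sum_le_sum hmid
      _ = 42 * (m+2) := by rw [Finset.sum_const, Nat.card_Icc, smul_eq_mul]; omega
  have h2 : ((∑ k ∈ Finset.range (m+2+1), {p : ℕ × ℕ | p.1 < (net M m).arity (m+2+1) ∧
        p.2 < (net M m).arity k ∧ (net M m).A (m+2+1) k p.1 p.2 ≠ 0}.ncard) +
      {i : ℕ | i < (net M m).arity (m+2+1) ∧ (net M m).b (m+2+1) i ≠ 0}.ncard)
      ≤ 36 * (m+3) + 6 := by
    have hs : (∑ k ∈ Finset.range (m+2+1), {p : ℕ × ℕ | p.1 < (net M m).arity (m+2+1) ∧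
        p.2 < (net M m).arity k ∧ (net M m).A (m+2+1) k p.1 p.2 ≠ 0}.ncard) ≤ 36 * (m+3) := by
      calc _ ≤ ∑ _k ∈ Finset.range (m+2+1), 36 :=
            Finset.sum_le_sum (fun k _ => Wset_le M m (m+2+1) k)
        _ = 36 * (m+3) := by rw [Finset.sum_const, Finset.card_range, smul_eq_mul]; omega
    have hbias := Bset_le M m (m+2+1)
    omega
  omega

-- ### Estimates

lemma tv_mem (hM : 0 < M) (hx : |x| ≤ M) (hy : |y| ≤ M) :
    ∀ i < 3, 0 ≤ tv M x y i ∧ tv M x y i ≤ 1 := by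
  intro i _
  simp only [tv]
  have h2M : (0:ℝ) < 2 * M := by linarith
  constructor
  · apply div_nonneg _ (le_of_lt h2M)
    split <;> try split
    all_goals exact abs_nonneg _
  · rw [div_le_one h2M]
    split
    · calc |x + y| ≤ |x| + |y| := abs_add_le x y
        _ ≤ 2 * M := by linarith
    · split
      · linarith
      · linarith

lemma tv0 : tv M x y 0 = |x + y| / (2*M) := rfl
lemma tv1 : tv M x y 1 = |x| / (2*M) := rfl
lemma tv2 : tv M x y 2 = |y| / (2*M) := rfl

lemma err_decomp (hM : 0 < M) (hx : |x| ≤ M) (hy : |y| ≤ M) :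
    (net M m).realize relu (inp x y) 0 - x * y
      = 2*M^2 * (errA m (tv M x y 0) - errA m (tv M x y 1) - errA m (tv M x y 2)) := by
  rw [net_realize_eq M m x y (tv_mem M x y hM hx hy)]
  simp only [errA]
  have hMne : (M:ℝ) ≠ 0 := ne_of_gt hM
  have e0 : tv M x y 0 ^ 2 = (x+y)^2 / (2*M)^2 := by
    rw [tv0, div_pow, sq_abs]
  have e1 : tv M x y 1 ^ 2 = x^2 / (2*M)^2 := by rw [tv1, div_pow, sq_abs]
  have e2 : tv M x y 2 ^ 2 = y^2 / (2*M)^2 := by rw [tv2, div_pow, sq_abs]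
  rw [mul_sub, mul_sub, mul_sub, mul_sub, mul_sub]
  rw [e0, e1, e2]
  field_simp
  ring

lemma sup_est (hM : 0 < M) (hx : |x| ≤ M) (hy : |y| ≤ M) :
    |(net M m).realize relu (inp x y) 0 - x * y| ≤ (3/2) * M^2 * (1/4)^m := by
  rw [err_decomp M m x y hM hx hy]
  have htv := tv_mem M x y hM hx hy
  have b0 := errA_bound (htv 0 (by omega)).1 (htv 0 (by omega)).2 m
  have b1 := errA_bound (htv 1 (by omega)).1 (htv 1 (by omega)).2 m
  have b2 := errA_bound (htv 2 (by omega)).1 (htv 2 (by omega)).2 m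
  rw [abs_mul, abs_of_nonneg (by positivity : (0:ℝ) ≤ 2*M^2)]
  have h3 : |errA m (tv M x y 0) - errA m (tv M x y 1) - errA m (tv M x y 2)|
      ≤ 3 * ((1/4) * (1/4)^m) := by
    have c0 := abs_le.mp b0
    have c1 := abs_le.mp b1
    have c2 := abs_le.mp b2
    rw [abs_le]
    constructor <;> linarith
  calc 2*M^2 * |errA m (tv M x y 0) - errA m (tv M x y 1) - errA m (tv M x y 2)|
      ≤ 2*M^2 * (3 * ((1/4) * (1/4)^m)) :=
        mul_le_mul_of_nonneg_left h3 (by positivity)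
    _ = (3/2) * M^2 * (1/4)^m := by ring

lemma lip_est (hM : 0 < M) (x' y' : ℝ) (hx : |x| ≤ M) (hy : |y| ≤ M)
    (hx' : |x'| ≤ M) (hy' : |y'| ≤ M) :
    |((net M m).realize relu (inp x y) 0 - x * y) -
        ((net M m).realize relu (inp x' y') 0 - x' * y')|
      ≤ 2*M*(1/2)^m * (|x - x'| + |y - y'|) := by
  rw [err_decomp M m x y hM hx hy, err_decomp M m x' y' hM hx' hy']
  have htv := tv_mem M x y hM hx hy
  have htv' := tv_mem M x' y' hM hx' hy'
  have hP : (0:ℝ) ≤ (1/2:ℝ)^m := by positivity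
  have h2M : (0:ℝ) < 2*M := by linarith
  have ht0 : |tv M x y 0 - tv M x' y' 0| ≤ (|x - x'| + |y - y'|) / (2*M) := by
    have hnum : |(|x + y|) - (|x' + y'|)| ≤ |x - x'| + |y - y'| := by
      calc |(|x + y|) - (|x' + y'|)| ≤ |(x + y) - (x' + y')| :=
            abs_abs_sub_abs_le_abs_sub _ _
        _ = |(x - x') + (y - y')| := by rw [show (x+y) - (x'+y') = (x - x') + (y - y') by ring]
        _ ≤ |x - x'| + |y - y'| := abs_add_le _ _
    rw [tv0, tv0, div_sub_div_same, abs_div, abs_of_pos h2M]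
    exact (div_le_div_iff_of_pos_right h2M).mpr hnum
  have ht1 : |tv M x y 1 - tv M x' y' 1| ≤ |x - x'| / (2*M) := by
    rw [tv1, tv1, div_sub_div_same, abs_div, abs_of_pos h2M]
    exact (div_le_div_iff_of_pos_right h2M).mpr (abs_abs_sub_abs_le_abs_sub _ _)
  have ht2 : |tv M x y 2 - tv M x' y' 2| ≤ |y - y'| / (2*M) := by
    rw [tv2, tv2, div_sub_div_same, abs_div, abs_of_pos h2M]
    exact (div_le_div_iff_of_pos_right h2M).mpr (abs_abs_sub_abs_le_abs_sub _ _)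
  have d0 : |errA m (tv M x y 0) - errA m (tv M x' y' 0)|
      ≤ (1/2)^m * ((|x - x'| + |y - y'|) / (2*M)) :=
    (errA_lip (htv 0 (by omega)).1 (htv 0 (by omega)).2 (htv' 0 (by omega)).1
      (htv' 0 (by omega)).2 m).trans (mul_le_mul_of_nonneg_left ht0 hP)
  have d1 : |errA m (tv M x y 1) - errA m (tv M x' y' 1)|
      ≤ (1/2)^m * (|x - x'| / (2*M)) :=
    (errA_lip (htv 1 (by omega)).1 (htv 1 (by omega)).2 (htv' 1 (by omega)).1
      (htv' 1 (by omega)).2 m).trans (mul_le_mul_of_nonneg_left ht1 hP)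
  have d2 : |errA m (tv M x y 2) - errA m (tv M x' y' 2)|
      ≤ (1/2)^m * (|y - y'| / (2*M)) :=
    (errA_lip (htv 2 (by omega)).1 (htv 2 (by omega)).2 (htv' 2 (by omega)).1
      (htv' 2 (by omega)).2 m).trans (mul_le_mul_of_nonneg_left ht2 hP)
  have key : |(errA m (tv M x y 0) - errA m (tv M x y 1) - errA m (tv M x y 2)) -
      (errA m (tv M x' y' 0) - errA m (tv M x' y' 1) - errA m (tv M x' y' 2))|
      ≤ (1/2)^m * ((|x - x'| + |y - y'|) / M) := by
    have c0 := abs_le.mp d0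
    have c1 := abs_le.mp d1
    have c2 := abs_le.mp d2
    rw [abs_le]
    have e : (1/2:ℝ)^m * ((|x - x'| + |y - y'|) / M)
        = (1/2)^m * ((|x - x'| + |y - y'|) / (2*M)) + (1/2)^m * (|x - x'| / (2*M))
          + (1/2)^m * (|y - y'| / (2*M)) := by
      field_simp
      ring
    rw [e]
    constructor <;> linarith
  calc |2*M^2 * (errA m (tv M x y 0) - errA m (tv M x y 1) - errA m (tv M x y 2)) -
      2*M^2 * (errA m (tv M x' y' 0) - errA m (tv M x' y' 1) - errA m (tv M x' y' 2))|
      = 2*M^2 * |(errA m (tv M x y 0) - errA m (tv M x y 1) - errA m (tv M x y 2)) -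
        (errA m (tv M x' y' 0) - errA m (tv M x' y' 1) - errA m (tv M x' y' 2))| := by
        rw [← mul_sub, abs_mul, abs_of_nonneg (by positivity : (0:ℝ) ≤ 2*M^2)]
    _ ≤ 2*M^2 * ((1/2)^m * ((|x - x'| + |y - y'|) / M)) :=
        mul_le_mul_of_nonneg_left key (by positivity)
    _ = 2*M*(1/2)^m * (|x - x'| + |y - y'|) := by
        field_simp

lemma vanish_x (hM : 0 < M) (hx : |x| ≤ M) :
    (net M m).realize relu (inp x 0) 0 = 0 := by
  have h0 : |(0:ℝ)| ≤ M := by simpa using hM.le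
  rw [net_realize_eq M m x 0 (tv_mem M x 0 hM hx h0)]
  have e01 : tv M x 0 0 = tv M x 0 1 := by rw [tv0, tv1, add_zero]
  have e2 : tv M x 0 2 = 0 := by rw [tv2, abs_zero, zero_div]
  rw [e01, e2, sqA_zero]
  ring

lemma vanish_y (hM : 0 < M) (hy : |y| ≤ M) :
    (net M m).realize relu (inp 0 y) 0 = 0 := by
  have h0 : |(0:ℝ)| ≤ M := by simpa using hM.le
  rw [net_realize_eq M m 0 y (tv_mem M 0 y hM h0 hy)]
  have e02 : tv M 0 y 0 = tv M 0 y 2 := by rw [tv0, tv2, zero_add]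
  have e1 : tv M 0 y 1 = 0 := by rw [tv1, abs_zero, zero_div]
  rw [e02, e1, sqA_zero]
  ring

end MulNet

/-- **Approximate multiplication network in `W^{1,∞}`.**
For every `M ≥ 1` there are constants `c, c₁, c₂ > 0` such that for every
`ε ∈ (0,1/2)` there is a ReLU network with two-dimensional input and one-dimensional
output whose realization `h` approximates the product `x·y` on `[−M,M]²` up to `ε` in
the uniform norm, with `h − x·y` being `ε`-Lipschitz in the `ℓ¹`-norm, `h` vanishing
when one input vanishes, `h` being `c·M`-Lipschitz in the `ℓ¹`-norm, and the number of
layers, neurons and weights each bounded by `c₁·log₂(1/ε) + c₂`. -/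
theorem multiplication_network (M : ℝ) (hM : 1 ≤ M) :
    ∃ c c₁ c₂ : ℝ, 0 < c ∧ 0 < c₁ ∧ 0 < c₂ ∧
      ∀ ε ∈ Set.Ioo (0 : ℝ) (1 / 2),
        ∃ Φ : NN, Φ.d = 2 ∧ Φ.outDim = 1 ∧
          ∀ h : ℝ → ℝ → ℝ,
            (h = fun x y => Φ.realize relu (fun i => if i = 0 then x else y) 0) →
            (∀ x ∈ Set.Icc (-M) M, ∀ y ∈ Set.Icc (-M) M,
              |h x y - x * y| ≤ ε) ∧
            (∀ x ∈ Set.Icc (-M) M, ∀ y ∈ Set.Icc (-M) M,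
              ∀ x' ∈ Set.Icc (-M) M, ∀ y' ∈ Set.Icc (-M) M,
                |(h x y - x * y) - (h x' y' - x' * y')| ≤
                  ε * (|x - x'| + |y - y'|)) ∧
            (∀ x ∈ Set.Icc (-M) M, h x 0 = 0 ∧ h 0 x = 0) ∧
            (∀ x ∈ Set.Icc (-M) M, ∀ y ∈ Set.Icc (-M) M,
              ∀ x' ∈ Set.Icc (-M) M, ∀ y' ∈ Set.Icc (-M) M,
                |h x y - h x' y'| ≤ c * M * (|x - x'| + |y - y'|)) ∧
            (Φ.L : ℝ) ≤ c₁ * Real.logb 2 (1 / ε) + c₂ ∧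
            (Φ.numNeurons : ℝ) ≤ c₁ * Real.logb 2 (1 / ε) + c₂ ∧
            (Φ.numWeights : ℝ) ≤ c₁ * Real.logb 2 (1 / ε) + c₂ := by
  classical
  have hM0 : (0:ℝ) < M := lt_of_lt_of_le one_pos hM
  have hM2 : (1:ℝ) ≤ M^2 := by nlinarith
  have hlogM : (0:ℝ) ≤ Real.logb 2 (2*M^2) := Real.logb_nonneg one_lt_two (by nlinarith)
  refine ⟨2, 78, 78 * Real.logb 2 (2*M^2) + 300, by norm_num, by norm_num, by linarith, ?_⟩
  rintro ε ⟨hε0, hε2⟩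
  set m := ⌈Real.logb 2 (2*M^2/ε)⌉₊ with hmdef
  have hX0 : (0:ℝ) < 2*M^2/ε := by positivity
  have hX1 : (1:ℝ) ≤ 2*M^2/ε := by rw [le_div_iff₀ hε0]; nlinarith
  have hpow : (1/2:ℝ)^m ≤ ε/(2*M^2) := by
    have h1 : Real.logb 2 (2*M^2/ε) ≤ (m:ℝ) := Nat.le_ceil _
    have h2 : (2*M^2/ε : ℝ) ≤ 2^(m:ℕ) := by
      have h3 := Real.rpow_le_rpow_of_exponent_le (by norm_num : (1:ℝ) ≤ 2) h1
      rwa [Real.rpow_logb (by norm_num) (by norm_num) hX0, Real.rpow_natCast] at h3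
    have h4 : (0:ℝ) < 2^(m:ℕ) := by positivity
    rw [div_pow, one_pow, div_le_div_iff₀ h4 (by positivity)]
    rw [div_le_iff₀ hε0] at h2
    linarith
  have hp0 : (0:ℝ) ≤ (1/2:ℝ)^m := by positivity
  have hlogε : (0:ℝ) ≤ Real.logb 2 (1/ε) := by
    apply Real.logb_nonneg one_lt_two
    rw [le_div_iff₀ hε0, one_mul]
    linarith
  have hmle : (m:ℝ) ≤ Real.logb 2 (1/ε) + Real.logb 2 (2*M^2) + 1 := by
    have h5 : (m:ℝ) < Real.logb 2 (2*M^2/ε) + 1 :=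
      Nat.ceil_lt_add_one (Real.logb_nonneg one_lt_two hX1)
    have h6 : Real.logb 2 (2*M^2/ε) = Real.logb 2 (2*M^2) + Real.logb 2 (1/ε) := by
      rw [div_eq_mul_inv, Real.logb_mul (by positivity) (by positivity), one_div]
    linarith
  refine ⟨MulNet.net M m, rfl, MulNet.net_outDim M m, ?_⟩
  intro h hh
  have hxyeq : ∀ a b : ℝ, h a b = (MulNet.net M m).realize relu (MulNet.inp a b) 0 := by
    intro a b
    rw [hh]
    rfl
  have hLip : (2:ℝ)*M*(1/2)^m ≤ ε := by
    calc (2:ℝ)*M*(1/2)^m ≤ 2*M*(ε/(2*M^2)) :=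
          mul_le_mul_of_nonneg_left hpow (by positivity)
      _ = ε/M := by field_simp
      _ ≤ ε := by rw [div_le_iff₀ hM0]; nlinarith
  have core_lip : ∀ x y x' y' : ℝ, |x| ≤ M → |y| ≤ M → |x'| ≤ M → |y'| ≤ M →
      |(h x y - x*y) - (h x' y' - x'*y')| ≤ 2*M*(1/2)^m * (|x-x'| + |y-y'|) := by
    intro x y x' y' hx hy hx' hy'
    rw [hxyeq, hxyeq]
    exact MulNet.lip_est M m x y hM0 x' y' hx hy hx' hy'
  refine ⟨?_, ?_, ?_, ?_, ?_, ?_, ?_⟩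
  · -- uniform bound
    intro x hx y hy
    rw [Set.mem_Icc] at hx hy
    have hsup := MulNet.sup_est M m x y hM0 (abs_le.mpr hx) (abs_le.mpr hy)
    rw [← hxyeq] at hsup
    have h14 : ((1/4:ℝ))^m ≤ (ε/(2*M^2))^2 := by
      have e4 : ((1/4:ℝ))^m = ((1/2:ℝ)^m) * ((1/2:ℝ)^m) := by
        rw [← mul_pow]; norm_num
      rw [e4, sq]
      exact mul_le_mul hpow hpow hp0 (by positivity)
    have hfin : (3/2:ℝ) * M^2 * (ε/(2*M^2))^2 ≤ ε := by
      have e : (3/2:ℝ) * M^2 * (ε/(2*M^2))^2 = 3*ε^2/(8*M^2) := by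
        field_simp
        ring
      rw [e, div_le_iff₀ (by positivity)]
      nlinarith
    calc |h x y - x*y| ≤ (3/2) * M^2 * (1/4)^m := hsup
      _ ≤ (3/2) * M^2 * (ε/(2*M^2))^2 := mul_le_mul_of_nonneg_left h14 (by positivity)
      _ ≤ ε := hfin
  · -- Lipschitz of error
    intro x hx y hy x' hx' y' hy'
    rw [Set.mem_Icc] at hx hy hx' hy'
    refine (core_lip x y x' y' (abs_le.mpr hx) (abs_le.mpr hy) (abs_le.mpr hx')
      (abs_le.mpr hy')).trans ?_
    apply mul_le_mul_of_nonneg_right hLip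
    positivity
  · -- vanishing
    intro x hx
    rw [Set.mem_Icc] at hx
    exact ⟨by rw [hxyeq]; exact MulNet.vanish_x M m x hM0 (abs_le.mpr hx),
      by rw [hxyeq]; exact MulNet.vanish_y M m x hM0 (abs_le.mpr hx)⟩
  · -- Lipschitz of h
    intro x hx y hy x' hx' y' hy'
    rw [Set.mem_Icc] at hx hy hx' hy'
    have hδ := core_lip x y x' y' (abs_le.mpr hx) (abs_le.mpr hy) (abs_le.mpr hx')
      (abs_le.mpr hy')
    have hprod : |x*y - x'*y'| ≤ M * (|x - x'| + |y - y'|) := by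
      have e : x*y - x'*y' = x*(y - y') + y'*(x - x') := by ring
      rw [e]
      calc |x*(y - y') + y'*(x - x')| ≤ |x*(y - y')| + |y'*(x - x')| := abs_add_le _ _
        _ = |x| * |y - y'| + |y'| * |x - x'| := by rw [abs_mul, abs_mul]
        _ ≤ M * |y - y'| + M * |x - x'| := by
            apply add_le_add
            · exact mul_le_mul_of_nonneg_right (abs_le.mpr hx) (abs_nonneg _)
            · exact mul_le_mul_of_nonneg_right (abs_le.mpr hy') (abs_nonneg _)
        _ = M * (|x - x'| + |y - y'|) := by ring
    have e2 : h x y - h x' y' = ((h x y - x*y) - (h x' y' - x'*y')) + (x*y - x'*y') := by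
      ring
    have habs0 : (0:ℝ) ≤ |x - x'| + |y - y'| := by positivity
    have hLM : (2:ℝ)*M*(1/2)^m ≤ M := by
      calc (2:ℝ)*M*(1/2)^m ≤ ε := hLip
        _ ≤ M := by linarith
    calc |h x y - h x' y'|
        ≤ |(h x y - x*y) - (h x' y' - x'*y')| + |x*y - x'*y'| := by
          rw [e2]; exact abs_add_le _ _
      _ ≤ 2*M*(1/2)^m * (|x - x'| + |y - y'|) + M * (|x - x'| + |y - y'|) :=
          add_le_add hδ hprod
      _ ≤ M * (|x - x'| + |y - y'|) + M * (|x - x'| + |y - y'|) := by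
          apply add_le_add_left
          exact mul_le_mul_of_nonneg_right hLM habs0
      _ = 2 * M * (|x - x'| + |y - y'|) := by ring
  · -- depth bound
    rw [MulNet.net_L]
    push_cast
    linarith
  · -- neuron bound
    have hn : ((MulNet.net M m).numNeurons : ℝ) ≤ 6*(m:ℝ) + 24 := by
      have := MulNet.numNeurons_le M m
      calc ((MulNet.net M m).numNeurons : ℝ) ≤ ((6*m + 24 : ℕ) : ℝ) := by
            exact_mod_cast this
        _ = 6*(m:ℝ) + 24 := by push_cast; ring
    linarith
  · -- weight bound
    have hw : ((MulNet.net M m).numWeights : ℝ) ≤ 78*(m:ℝ) + 198 := by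
      have := MulNet.numWeights_le M m
      calc ((MulNet.net M m).numWeights : ℝ) ≤ ((78*m + 198 : ℕ) : ℝ) := by
            exact_mod_cast this
        _ = 78*(m:ℝ) + 198 := by push_cast; ring
    linarith

end
end
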